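/- arXiv:2307.09309 — 5 statements merged into one kernel-verified Lean document; each statement's English description precedes it below -/
import Mathlib

section
/- Let G be a finite simple graph with m edges. Then mc(G) ≥ m/2 + (√(8m+1) − 1)/8. -/
/-- The number of edges of `G` crossing the cut `(A, Aᶜ)`. -/
noncomputable def cutSize {V : Type*} (G : SimpleGraph V) (A : Set V) : ℕ :=
  {p : V × V | G.Adj p.1 p.2 ∧ p.1 ∈ A ∧ p.2 ∉ A}.ncard

/-- `mc(G)`: the maximum size of a cut of `G`. -/
noncomputable def maxCut {V : Type*} (G : SimpleGraph V) : ℕ :=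
  sSup {k | ∃ A : Set V, k = cutSize G A}

namespace Edwards

variable {V : Type*} [Fintype V] (G : SimpleGraph V)
open SimpleGraph
set_option linter.unusedSectionVars false
set_option maxHeartbeats 1000000

/-- Induced graph on a vertex set `S`, as a graph on the same vertex type. -/
def Gs (S : Set V) : SimpleGraph V where
  Adj x y := G.Adj x y ∧ x ∈ S ∧ y ∈ S
  symm := by constructor; rintro x y ⟨h, hx, hy⟩; exact ⟨h.symm, hy, hx⟩
  loopless := by constructor; rintro x ⟨h, _⟩; exact G.loopless.irrefl x h

def X (S A : Set V) : Set (V × V) :=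
  {p | G.Adj p.1 p.2 ∧ p.1 ∈ S ∧ p.2 ∈ S ∧ p.1 ∈ A ∧ p.2 ∉ A}

noncomputable def cutn (S A : Set V) : ℕ := (X G S A).ncard

noncomputable def e2 (S : Set V) : ℕ :=
  {p : V × V | G.Adj p.1 p.2 ∧ p.1 ∈ S ∧ p.2 ∈ S}.ncard

noncomputable def dS (S : Set V) (v : V) : ℕ := {y | y ∈ S ∧ G.Adj v y}.ncard

def rS (S : Set V) (x : V) : Set V := {y | (Gs G S).Reachable x y}

noncomputable def cS (S : Set V) : ℕ := ((fun x => rS G S x) '' S).ncard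

def Hpres (S T : Set V) : Prop :=
  ∀ x ∈ S \ T, ∀ y ∈ S \ T, (Gs G S).Reachable x y → (Gs G (S \ T)).Reachable x y

variable {G}

lemma e2_empty : e2 G ∅ = 0 := by
  simp [e2]

lemma cutn_empty : cutn G ∅ ∅ = 0 := by
  simp [cutn, X]

lemma cS_empty : cS G ∅ = 0 := by
  simp [cS]

lemma dS_eq_diff (v : V) (S : Set V) : dS G (S \ {v}) v = dS G S v := by
  unfold dS
  congr 1
  ext y
  simp only [Set.mem_setOf_eq, Set.mem_diff, Set.mem_singleton_iff]
  constructor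
  · rintro ⟨⟨h1, _⟩, h2⟩; exact ⟨h1, h2⟩
  · rintro ⟨h1, h2⟩; exact ⟨⟨h1, fun h => (G.irrefl (h ▸ h2))⟩, h2⟩

/-- counting: removing a vertex from `S` subtracts twice its degree into `S \ {v}`. -/
lemma e2_remove {S : Set V} {v : V} (hv : v ∈ S) :
    e2 G S = e2 G (S \ {v}) + 2 * dS G (S \ {v}) v := by
  classical
  set S' := S \ {v} with hS'
  have hsplit : {p : V × V | G.Adj p.1 p.2 ∧ p.1 ∈ S ∧ p.2 ∈ S} =
      {p : V × V | G.Adj p.1 p.2 ∧ p.1 ∈ S' ∧ p.2 ∈ S'} ∪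
      ((fun y => ((v : V), y)) '' {y | y ∈ S' ∧ G.Adj v y} ∪
        (fun y => (y, v)) '' {y | y ∈ S' ∧ G.Adj v y}) := by
    ext ⟨a, b⟩
    simp only [Set.mem_setOf_eq, Set.mem_union, Set.mem_image, Prod.mk.injEq, hS',
      Set.mem_diff, Set.mem_singleton_iff]
    constructor
    · rintro ⟨hadj, ha, hb⟩
      by_cases hav : a = v
      · subst hav
        have hbv : b ≠ a := fun h => G.irrefl (h ▸ hadj)
        exact Or.inr (Or.inl ⟨b, ⟨⟨hb, hbv⟩, hadj⟩, rfl, rfl⟩)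
      · by_cases hbv : b = v
        · subst hbv
          exact Or.inr (Or.inr ⟨a, ⟨⟨ha, hav⟩, hadj.symm⟩, rfl, rfl⟩)
        · exact Or.inl ⟨hadj, ⟨ha, hav⟩, hb, hbv⟩
    · rintro (⟨hadj, ⟨ha, _⟩, hb, _⟩ | ⟨y, ⟨⟨hy, _⟩, hadj⟩, h1, h2⟩ | ⟨y, ⟨⟨hy, _⟩, hadj⟩, h1, h2⟩)
      · exact ⟨hadj, ha, hb⟩
      · subst h1; subst h2; exact ⟨hadj, hv, hy⟩
      · subst h1; subst h2; exact ⟨hadj.symm, hy, hv⟩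
  have hd1 : Disjoint {p : V × V | G.Adj p.1 p.2 ∧ p.1 ∈ S' ∧ p.2 ∈ S'}
      ((fun y => ((v : V), y)) '' {y | y ∈ S' ∧ G.Adj v y} ∪
        (fun y => (y, v)) '' {y | y ∈ S' ∧ G.Adj v y}) := by
    rw [Set.disjoint_left]
    rintro p ⟨_, ⟨ha, hav⟩, hb, hbv⟩ (⟨y, hy, rfl⟩ | ⟨y, hy, rfl⟩)
    · exact hav rfl
    · exact hbv rfl
  have hd2 : Disjoint ((fun y => ((v : V), y)) '' {y | y ∈ S' ∧ G.Adj v y})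
      ((fun y => (y, v)) '' {y | y ∈ S' ∧ G.Adj v y}) := by
    rw [Set.disjoint_left]
    rintro p ⟨y, hy, rfl⟩ ⟨y', ⟨⟨_, hyv⟩, _⟩, heq⟩
    exact hyv (congrArg Prod.fst heq)
  have hcard1 : ((fun y => ((v : V), y)) '' {y | y ∈ S' ∧ G.Adj v y}).ncard
      = dS G S' v :=
    Set.ncard_image_of_injective _ (fun a b h => (Prod.mk.injEq _ _ _ _ ▸ h).2)
  have hcard2 : ((fun y => (y, (v : V))) '' {y | y ∈ S' ∧ G.Adj v y}).ncard
      = dS G S' v :=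
    Set.ncard_image_of_injective _ (fun a b h => (Prod.mk.injEq _ _ _ _ ▸ h).1)
  rw [e2, hsplit, Set.ncard_union_eq hd1 (Set.toFinite _) (Set.toFinite _),
    Set.ncard_union_eq hd2 (Set.toFinite _) (Set.toFinite _), hcard1, hcard2]
  unfold e2
  ring


lemma cutn_out {S A : Set V} {v : V} (hv : v ∈ S) (hA : A ⊆ S \ {v}) :
    cutn G S A = cutn G (S \ {v}) A + dS G A v := by
  classical
  set S' := S \ {v} with hS'
  have hsplit : X G S A = X G S' A ∪ (fun y => (y, v)) '' {y | y ∈ A ∧ G.Adj v y} := by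
    ext ⟨a, b⟩
    simp only [X, Set.mem_setOf_eq, Set.mem_union, Set.mem_image, Prod.mk.injEq, hS',
      Set.mem_diff, Set.mem_singleton_iff]
    constructor
    · rintro ⟨hadj, ha, hb, haA, hbA⟩
      by_cases hbv : b = v
      · subst hbv; exact Or.inr ⟨a, ⟨haA, hadj.symm⟩, rfl, rfl⟩
      · exact Or.inl ⟨hadj, (hA haA), ⟨hb, hbv⟩, haA, hbA⟩
    · rintro (⟨hadj, ha, hb, haA, hbA⟩ | ⟨y, ⟨hyA, hadj⟩, rfl, rfl⟩)
      · exact ⟨hadj, ha.1, hb.1, haA, hbA⟩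
      · exact ⟨hadj.symm, (hA hyA).1, hv, hyA, fun h => ((hA h).2 rfl)⟩
  have hd : Disjoint (X G S' A) ((fun y => (y, (v:V))) '' {y | y ∈ A ∧ G.Adj v y}) := by
    rw [Set.disjoint_left]
    rintro p ⟨hadj, ha, hb, haA, hbA⟩ ⟨y, hy, rfl⟩
    exact hb.2 rfl
  have hcard : ((fun y => (y, (v:V))) '' {y | y ∈ A ∧ G.Adj v y}).ncard = dS G A v :=
    Set.ncard_image_of_injective _ (fun a b h => (Prod.mk.injEq _ _ _ _ ▸ h).1)
  rw [cutn, hsplit, Set.ncard_union_eq hd (Set.toFinite _) (Set.toFinite _), hcard]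
  rfl

lemma cutn_in {S A : Set V} {v : V} (hv : v ∈ S) (hA : A ⊆ S \ {v}) :
    cutn G S (A ∪ {v}) = cutn G (S \ {v}) A + dS G ((S \ {v}) \ A) v := by
  classical
  set S' := S \ {v} with hS'
  have hsplit : X G S (A ∪ {v}) = X G S' A ∪ (fun y => (v, y)) '' {y | y ∈ S' \ A ∧ G.Adj v y} := by
    ext ⟨a, b⟩
    simp only [X, Set.mem_setOf_eq, Set.mem_union, Set.mem_image, Prod.mk.injEq, hS',
      Set.mem_diff, Set.mem_singleton_iff]
    constructor
    · rintro ⟨hadj, ha, hb, haA, hbA⟩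
      push_neg at hbA
      obtain ⟨hbA1, hbA2⟩ := hbA
      rcases haA with haA | hav
      · exact Or.inl ⟨hadj, (hA haA), ⟨hb, hbA2⟩, haA, hbA1⟩
      · subst hav; exact Or.inr ⟨b, ⟨⟨⟨hb, hbA2⟩, hbA1⟩, hadj⟩, rfl, rfl⟩
    · rintro (⟨hadj, ha, hb, haA, hbA⟩ | ⟨y, ⟨⟨⟨hy, hyv⟩, hyA⟩, hadj⟩, rfl, rfl⟩)
      · refine ⟨hadj, ha.1, hb.1, Or.inl haA, ?_⟩
        rintro (h | h)
        · exact hbA h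
        · exact hb.2 h
      · refine ⟨hadj, hv, hy, Or.inr rfl, ?_⟩
        rintro (h | h)
        · exact hyA h
        · exact hyv h
  have hd : Disjoint (X G S' A) ((fun y => ((v:V), y)) '' {y | y ∈ S' \ A ∧ G.Adj v y}) := by
    rw [Set.disjoint_left]
    rintro p ⟨hadj, ha, hb, haA, hbA⟩ ⟨y, hy, rfl⟩
    exact (hA haA).2 rfl
  have hcard : ((fun y => ((v:V), y)) '' {y | y ∈ S' \ A ∧ G.Adj v y}).ncard
      = dS G (S' \ A) v :=
    Set.ncard_image_of_injective _ (fun a b h => (Prod.mk.injEq _ _ _ _ ▸ h).2)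
  rw [cutn, hsplit, Set.ncard_union_eq hd (Set.toFinite _) (Set.toFinite _), hcard]
  rfl

lemma dS_split {S' A : Set V} (v : V) (hA : A ⊆ S') :
    dS G A v + dS G (S' \ A) v = dS G S' v := by
  classical
  rw [dS, dS, dS, ← Set.ncard_union_eq ?_ (Set.toFinite _) (Set.toFinite _)]
  · congr 1
    ext y
    simp only [Set.mem_union, Set.mem_setOf_eq, Set.mem_diff]
    constructor
    · rintro (⟨h1, h2⟩ | ⟨⟨h1, _⟩, h2⟩)
      · exact ⟨hA h1, h2⟩
      · exact ⟨h1, h2⟩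
    · rintro ⟨h1, h2⟩
      by_cases hy : y ∈ A
      · exact Or.inl ⟨hy, h2⟩
      · exact Or.inr ⟨⟨h1, hy⟩, h2⟩
  · rw [Set.disjoint_left]
    rintro y ⟨h1, _⟩ ⟨⟨_, h3⟩, _⟩
    exact h3 h1

lemma cutn_compl {S A : Set V} (hA : A ⊆ S) :
    cutn G S (S \ A) = cutn G S A := by
  classical
  have hswap : X G S (S \ A) = Prod.swap '' X G S A := by
    ext ⟨a, b⟩
    simp only [X, Set.mem_setOf_eq, Set.mem_image, Set.mem_diff, Prod.swap, Prod.mk.injEq,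
      Prod.exists]
    constructor
    · rintro ⟨hadj, ha, hb, ⟨_, haA⟩, hbA⟩
      push_neg at hbA
      exact ⟨b, a, ⟨hadj.symm, hb, ha, hbA hb, haA⟩, rfl, rfl⟩
    · rintro ⟨x, y, ⟨hadj, hx, hy, hxA, hyA⟩, rfl, rfl⟩
      exact ⟨hadj.symm, hy, hx, ⟨hy, hyA⟩, fun h => h.2 hxA⟩
  rw [cutn, hswap, Set.ncard_image_of_injective _ Prod.swap_injective]
  rfl

lemma dS_insert {T : Set V} {u v : V} (hv : v ∉ T) (hadj : G.Adj u v) :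
    dS G (T ∪ {v}) u = dS G T u + 1 := by
  classical
  have : {y | y ∈ T ∪ {v} ∧ G.Adj u y} = insert v {y | y ∈ T ∧ G.Adj u y} := by
    ext y
    simp only [Set.mem_setOf_eq, Set.mem_union, Set.mem_singleton_iff, Set.mem_insert_iff]
    constructor
    · rintro ⟨(h | h), h2⟩
      · exact Or.inr ⟨h, h2⟩
      · exact Or.inl h
    · rintro (rfl | ⟨h1, h2⟩)
      · exact ⟨Or.inr rfl, hadj⟩
      · exact ⟨Or.inl h1, h2⟩
  rw [dS, this, Set.ncard_insert_of_notMem (fun h => hv h.1) (Set.toFinite _)]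
  rfl


lemma Gs_le {T S : Set V} (h : T ⊆ S) : Gs G T ≤ Gs G S := by
  rintro x y ⟨ha, hx, hy⟩; exact ⟨ha, h hx, h hy⟩

lemma reach_mono {T S : Set V} (h : T ⊆ S) {x y : V} (hr : (Gs G T).Reachable x y) :
    (Gs G S).Reachable x y := hr.mono (Gs_le h)

lemma mem_rS_self (S : Set V) (x : V) : x ∈ rS G S x := Reachable.refl x

lemma rS_eq_of_reach {S : Set V} {x y : V} (h : (Gs G S).Reachable x y) :
    rS G S x = rS G S y := by
  ext z
  exact ⟨fun hz => h.symm.trans hz, fun hz => h.trans hz⟩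

lemma walk_end_mem {S : Set V} {a b : V} (w : (Gs G S).Walk a b) (ha : a ∈ S) : b ∈ S := by
  induction w with
  | nil => exact ha
  | cons h p ih => exact ih h.2.2

lemma rS_subset {S : Set V} {x : V} (hx : x ∈ S) : rS G S x ⊆ S := by
  intro y hy
  obtain ⟨w⟩ := hy
  exact walk_end_mem w hx

lemma reach_of_mem_support {S : Set V} {a b x : V} (w : (Gs G S).Walk a b)
    (hx : x ∈ w.support) : (Gs G S).Reachable a x := by
  classical
  exact ⟨w.takeUntil x hx⟩

lemma reach_transfer {S T : Set V} {a b : V} (w : (Gs G S).Walk a b)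
    (h : ∀ x ∈ w.support, x ∉ T) : (Gs G (S \ T)).Reachable a b := by
  induction w with
  | nil => exact Reachable.refl _
  | @cons a c b hadj p ih =>
    have hc : c ∈ p.support := p.start_mem_support
    have h1 : (Gs G (S \ T)).Adj a c :=
      ⟨hadj.1, ⟨hadj.2.1, h a (by simp)⟩, ⟨hadj.2.2, h c (by simp [hc])⟩⟩
    exact h1.reachable.trans (ih fun x hx => h x (by simp [hx]))

lemma comps_disjoint {S : Set V} {x y z : V} (hx : z ∈ rS G S x) (hy : z ∈ rS G S y) :
    rS G S x = rS G S y := by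
  rw [rS_eq_of_reach (hx : (Gs G S).Reachable x z)]
  exact (rS_eq_of_reach (hy : (Gs G S).Reachable y z)).symm

lemma cS_le_ncard (S : Set V) : cS G S ≤ S.ncard := by
  classical
  rcases Set.eq_empty_or_nonempty S with rfl | ⟨v₀, hv₀⟩
  · simp [cS]
  haveI : Nonempty V := ⟨v₀⟩
  apply Set.ncard_le_ncard_of_injOn
    (fun R => if h : R.Nonempty then h.some else Classical.arbitrary V)
  · rintro R ⟨x₀, hx₀, rfl⟩
    have hne : (rS G S x₀).Nonempty := ⟨x₀, mem_rS_self _ _⟩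
    simp only [dif_pos hne]
    exact rS_subset hx₀ hne.some_mem
  · rintro R ⟨x₁, hx₁, rfl⟩ R' ⟨x₂, hx₂, rfl⟩ h
    show rS G S x₁ = rS G S x₂
    have h1 : (rS G S x₁).Nonempty := ⟨x₁, mem_rS_self _ _⟩
    have h2 : (rS G S x₂).Nonempty := ⟨x₂, mem_rS_self _ _⟩
    simp only [dif_pos h1, dif_pos h2] at h
    exact comps_disjoint (h ▸ h1.some_mem) h2.some_mem

lemma cS_mono_of_Hpres {S T : Set V} (hp : Hpres G S T) : cS G (S \ T) ≤ cS G S := by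
  classical
  have key : ∀ x₀ ∈ S \ T,
      {y | ∃ x, x ∈ rS G (S \ T) x₀ ∧ x ∈ S \ T ∧ (Gs G S).Reachable x y} = rS G S x₀ := by
    intro x₀ hx₀
    ext y
    simp only [Set.mem_setOf_eq]
    constructor
    · rintro ⟨x, hx1, hx2, hx3⟩
      exact Reachable.trans (reach_mono Set.diff_subset (hx1 : (Gs G (S\T)).Reachable x₀ x)) hx3
    · intro hy
      exact ⟨x₀, mem_rS_self _ _, hx₀, hy⟩
  apply Set.ncard_le_ncard_of_injOn
    (fun R => {y | ∃ x, x ∈ R ∧ x ∈ S \ T ∧ (Gs G S).Reachable x y})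
  · rintro R ⟨x₀, hx₀, rfl⟩
    exact ⟨x₀, hx₀.1, (key x₀ hx₀).symm⟩
  · rintro R ⟨x₁, hx₁, rfl⟩ R' ⟨x₂, hx₂, rfl⟩ h
    show rS G (S \ T) x₁ = rS G (S \ T) x₂
    have h' : rS G S x₁ = rS G S x₂ := by
      rw [← key x₁ hx₁, ← key x₂ hx₂]
      exact h
    have : x₂ ∈ rS G S x₁ := h' ▸ mem_rS_self S x₂
    have hr : (Gs G (S \ T)).Reachable x₁ x₂ := hp x₁ hx₁ x₂ hx₂ this
    exact rS_eq_of_reach hr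

/-- removing a whole component drops the component count by exactly one. -/
lemma comps_drop {S : Set V} {r : V} (hr : r ∈ S) :
    ((fun x => rS G (S \ rS G S r) x) '' (S \ rS G S r))
      = ((fun x => rS G S x) '' S) \ {rS G S r} := by
  classical
  set C := rS G S r with hC
  have avoid : ∀ x₀ ∈ S \ C, ∀ {y}, (Gs G S).Reachable x₀ y →
      (Gs G (S \ C)).Reachable x₀ y := by
    rintro x₀ hx₀ y ⟨w⟩
    refine reach_transfer w fun z hz hzC => ?_
    have h1 : (Gs G S).Reachable x₀ z := reach_of_mem_support w hz
    have h2 : (Gs G S).Reachable r z := hzC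
    exact hx₀.2 (h2.trans h1.symm : (Gs G S).Reachable r x₀)
  have same : ∀ x₀ ∈ S \ C, rS G (S \ C) x₀ = rS G S x₀ := by
    intro x₀ hx₀
    ext y
    exact ⟨fun hy => reach_mono Set.diff_subset hy, fun hy => avoid x₀ hx₀ hy⟩
  ext R
  simp only [Set.mem_image, Set.mem_diff, Set.mem_singleton_iff]
  constructor
  · rintro ⟨x₀, hx₀, rfl⟩
    refine ⟨⟨x₀, hx₀.1, (same x₀ hx₀).symm⟩, ?_⟩
    rw [same x₀ hx₀]
    intro hEq
    exact hx₀.2 (hEq ▸ mem_rS_self S x₀)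
  · rintro ⟨⟨x₀, hx₀, rfl⟩, hne⟩
    have hx₀C : x₀ ∉ C := by
      intro hx₀C
      exact hne (comps_disjoint (mem_rS_self S x₀) (hx₀C : (Gs G S).Reachable r x₀))
    exact ⟨x₀, ⟨hx₀, hx₀C⟩, same x₀ ⟨hx₀, hx₀C⟩⟩

lemma cS_drop {S : Set V} {r : V} (hr : r ∈ S) :
    cS G (S \ rS G S r) + 1 = cS G S := by
  have hmem : rS G S r ∈ ((fun x => rS G S x) '' S) := ⟨r, hr, rfl⟩
  rw [cS, comps_drop hr, Set.ncard_diff_singleton_add_one hmem (Set.toFinite _)]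
  rfl





lemma exists_penult {G' : SimpleGraph V} {a b : V} (w : G'.Walk a b) (h : w.length ≠ 0) :
    ∃ (y : V) (q : G'.Walk a y), G'.Adj b y ∧ q.length + 1 = w.length := by
  have hlen : w.reverse.length = w.length := Walk.length_reverse w
  rcases hw : w.reverse with _ | ⟨hadj, p⟩
  · rw [hw] at hlen
    simp at hlen
    omega
  · refine ⟨_, p.reverse, hadj, ?_⟩
    rw [hw] at hlen
    simp only [Walk.length_cons, Walk.length_reverse] at hlen ⊢
    omega

/-- The big structure lemma: any nonempty `S` has an isolated vertex, an odd-degree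
non-cut vertex, or an adjacent non-cut pair. -/
lemma struct (S : Set V) (hne : S.Nonempty) :
    (∃ v ∈ S, ∀ y ∈ S, ¬ G.Adj v y) ∨
    (∃ v ∈ S, Odd (dS G S v) ∧ Hpres G S {v}) ∨
    (∃ u ∈ S, ∃ v ∈ S, G.Adj u v ∧ Hpres G S {u, v}) := by
  classical
  obtain ⟨r, hr⟩ := hne
  by_cases hiso : ∀ y ∈ S, ¬ G.Adj r y
  · exact Or.inl ⟨r, hr, hiso⟩
  push_neg at hiso
  obtain ⟨y₀, hy₀S, hy₀adj⟩ := hiso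
  set H := Gs G S with hH
  set R : Set V := {z | H.Reachable r z} with hR
  have hrR : r ∈ R := Reachable.refl r
  have hRS : ∀ z ∈ R, z ∈ S := by
    intro z hz
    obtain ⟨w⟩ := (hz : H.Reachable r z)
    exact walk_end_mem w hr
  have hRfin : R.toFinset.Nonempty := ⟨r, by simp [hrR]⟩
  set t : Finset ℕ := R.toFinset.image (fun z => H.dist r z) with ht
  have htne : t.Nonempty := hRfin.image _
  set D : ℕ := t.max' htne with hD
  have hDle : ∀ z ∈ R, H.dist r z ≤ D := by
    intro z hz
    exact Finset.le_max' t _ (Finset.mem_image.mpr ⟨z, by simp [hz], rfl⟩)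
  have hDmem : ∃ v, v ∈ R ∧ H.dist r v = D := by
    obtain ⟨z, hz, hzd⟩ := Finset.mem_image.mp (t.max'_mem htne)
    exact ⟨z, by simpa using hz, hzd⟩
  have hy₀R : y₀ ∈ R := (Adj.reachable ⟨hy₀adj, hr, hy₀S⟩ : H.Reachable r y₀)
  have hD1 : 1 ≤ D := by
    have h1 : H.dist r y₀ = 1 := dist_eq_one_iff_adj.mpr ⟨hy₀adj, hr, hy₀S⟩
    have := hDle y₀ hy₀R
    omega
  set F : Set V := {z | z ∈ R ∧ H.dist r z = D} with hF
  have hrF : r ∉ F := by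
    intro h
    have : H.dist r r = 0 := dist_self
    rw [h.2] at this
    omega
  -- geodesics avoid farthest vertices
  have AV : ∀ x ∈ F, ∀ z ∈ R, z ≠ x → ∀ (W : H.Walk r z), W.length = H.dist r z →
      x ∉ W.support := by
    rintro x ⟨hxR, hxD⟩ z hzR hzx W hW hsup
    have h1 : H.dist r x ≤ (W.takeUntil x hsup).length := dist_le _
    have h2 : (W.dropUntil x hsup).length ≠ 0 := by
      intro h0
      exact hzx (Walk.exists_length_eq_zero_iff.mp ⟨_, h0⟩).symm
    have h3 : (W.takeUntil x hsup).length + (W.dropUntil x hsup).length = W.length := by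
      rw [← Walk.length_append, Walk.take_spec]
    have h4 : H.dist r z ≤ D := hDle z hzR
    omega
  -- from-r reachability avoiding a set of farthest vertices
  have AVR : ∀ T : Set V, T ⊆ F → ∀ z ∈ R, z ∉ T → (Gs G (S \ T)).Reachable r z := by
    intro T hTF z hzR hzT
    obtain ⟨W, hW⟩ := (hzR : H.Reachable r z).exists_walk_length_eq_dist
    refine reach_transfer W fun x hx hxT => ?_
    exact AV x (hTF hxT) z hzR (fun h => hzT (h ▸ hxT)) W hW hx
  -- Hpres from the from-r property
  have HPgen : ∀ T : Set V, T ⊆ R →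
      (∀ z ∈ R, z ∉ T → (Gs G (S \ T)).Reachable r z) → Hpres G S T := by
    intro T hTR hT a ha b hb hab
    obtain ⟨w⟩ := hab
    by_cases hsup : ∀ x ∈ w.support, x ∉ T
    · exact reach_transfer w hsup
    · push_neg at hsup
      obtain ⟨x, hxw, hxT⟩ := hsup
      have hxR : x ∈ R := hTR hxT
      have hax : H.Reachable a x := reach_of_mem_support w hxw
      have haR : a ∈ R := ((hxR : H.Reachable r x).trans hax.symm : H.Reachable r a)
      have hbR : b ∈ R := (haR : H.Reachable r a).trans ⟨w⟩
      exact ((hT a haR ha.2).symm.trans (hT b hbR hb.2))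
  have hFR : F ⊆ R := fun z hz => hz.1
  -- case: some farthest vertex has odd degree
  by_cases hodd : ∃ x ∈ F, Odd (dS G S x)
  · obtain ⟨x, hxF, hxodd⟩ := hodd
    refine Or.inr (Or.inl ⟨x, hRS x hxF.1, hxodd, ?_⟩)
    refine HPgen {x} (by simpa using hxF.1) ?_
    intro z hz hzx
    exact AVR {x} (by simpa using hxF) z hz hzx
  -- case: two adjacent farthest vertices
  by_cases hadjF : ∃ x ∈ F, ∃ y ∈ F, G.Adj x y
  · obtain ⟨x, hxF, y, hyF, hxy⟩ := hadjF
    refine Or.inr (Or.inr ⟨x, hRS x hxF.1, y, hRS y hyF.1, hxy, ?_⟩)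
    refine HPgen {x, y} ?_ ?_
    · rintro z (rfl | rfl)
      exacts [hxF.1, hyF.1]
    · intro z hz hzT
      refine AVR {x, y} ?_ z hz hzT
      rintro w (rfl | rfl)
      exacts [hxF, hyF]
  -- remaining: farthest set independent with all even degrees
  push_neg at hodd hadjF
  obtain ⟨v, hvR, hvD⟩ := hDmem
  have hvF : v ∈ F := ⟨hvR, hvD⟩
  have hvS : v ∈ S := hRS v hvR
  -- neighbors of a farthest vertex have distance ≥ D - 1, ≤ D - 1 if not farthest
  by_cases hD2 : 2 ≤ D
  case neg =>
    -- D = 1 : v has a unique neighbor r, odd degree, contradiction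
    exfalso
    have hDeq : D = 1 := by omega
    have hNv : {y | y ∈ S ∧ G.Adj v y} = {r} := by
      ext y
      simp only [Set.mem_setOf_eq, Set.mem_singleton_iff]
      constructor
      · rintro ⟨hyS, hyadj⟩
        have hyR : y ∈ R := (hvR : H.Reachable r v).trans (Adj.reachable ⟨hyadj, hvS, hyS⟩)
        have hle := hDle y hyR
        rcases Nat.lt_or_ge (H.dist r y) 1 with hlt | hge
        · have h0 : H.dist r y = 0 := by omega
          exact ((hyR : H.Reachable r y).dist_eq_zero_iff.mp h0).symm
        · have hyF : y ∈ F := ⟨hyR, by omega⟩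
          exact absurd hyadj (hadjF v hvF y hyF)
      · intro hyr
        have : H.dist r v = 1 := by rw [hvD, hDeq]
        have hadj : H.Adj r v := dist_eq_one_iff_adj.mp this
        exact ⟨hyr ▸ hr, hyr ▸ hadj.1.symm⟩
    have : dS G S v = 1 := by rw [dS, hNv, Set.ncard_singleton]
    exact (hodd v hvF) (this ▸ odd_one)
  case pos =>
    -- get a deepest neighbor u of v, with dist r u = D - 1
    obtain ⟨W, hW⟩ := (hvR : H.Reachable r v).exists_walk_length_eq_dist
    have hWlen : W.length ≠ 0 := by rw [hW, hvD]; omega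
    obtain ⟨y₁, q, hy₁adj, hy₁len⟩ := exists_penult W hWlen
    -- hy₁adj : H.Adj v y₁
    have hy₁R : y₁ ∈ R := (hvR : H.Reachable r v).trans hy₁adj.reachable
    have hy₁d : H.dist r y₁ = D - 1 := by
      have hub : H.dist r y₁ ≤ D - 1 := by
        have := dist_le q
        rw [hW, hvD] at hy₁len
        omega
      have hlb : D ≤ H.dist r y₁ + 1 := by
        obtain ⟨q₂, hq₂⟩ := (hy₁R : H.Reachable r y₁).exists_walk_length_eq_dist
        have := dist_le (q₂.append (Walk.cons hy₁adj.symm Walk.nil))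
        rw [Walk.length_append] at this
        simp only [Walk.length_cons, Walk.length_nil] at this
        rw [hvD] at this
        omega
      omega
    have hNne : ({y | y ∈ S ∧ G.Adj v y}).toFinset.Nonempty :=
      ⟨y₁, by simp only [Set.mem_toFinset, Set.mem_setOf_eq]; exact ⟨hy₁adj.2.2, hy₁adj.1⟩⟩
    obtain ⟨u, huN, humax⟩ := Finset.exists_max_image _ (fun y => H.dist r y) hNne
    rw [Set.mem_toFinset] at huN
    have huadj : H.Adj v u := ⟨huN.2, hvS, huN.1⟩
    have huR : u ∈ R := (hvR : H.Reachable r v).trans huadj.reachable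
    have hud : H.dist r u = D - 1 := by
      have h1 : H.dist r y₁ ≤ H.dist r u := humax y₁ (by simp only [Set.mem_toFinset, Set.mem_setOf_eq]; exact ⟨hy₁adj.2.2, hy₁adj.1⟩)
      have h2 : H.dist r u ≤ D := hDle u huR
      have h3 : H.dist r u ≠ D := by
        intro hEq
        exact (hadjF v hvF u ⟨huR, hEq⟩) huN.2
      omega
    have hur : u ≠ r := by
      intro h
      rw [h, SimpleGraph.dist_self] at hud
      omega
    have huv : u ≠ v := fun h => G.irrefl (h ▸ huN.2)
    set T : Set V := {u, v} with hT
    have hrT : r ∉ T := by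
      intro hmem
      rcases hmem with h | h
      · exact hur h.symm
      · exact hrF (h ▸ hvF)
    -- key distance fact for unreachable vertices
    have inner1 : ∀ z ∈ R, z ∉ T → ¬ (Gs G (S \ T)).Reachable r z → z ∈ F := by
      intro z hzR hzT hnr
      obtain ⟨Wz, hWz⟩ := (hzR : H.Reachable r z).exists_walk_length_eq_dist
      by_cases hvW : v ∈ Wz.support
      · exact absurd hvW (AV v hvF z hzR (fun h => hzT (by rw [h]; exact Or.inr rfl)) Wz hWz)
      by_cases huW : u ∈ Wz.support
      · have h1 : H.dist r u ≤ (Wz.takeUntil u huW).length := dist_le _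
        have h2 : (Wz.dropUntil u huW).length ≠ 0 := by
          intro h0
          have : u = z := Walk.exists_length_eq_zero_iff.mp ⟨_, h0⟩
          exact hzT (by rw [← this]; exact Or.inl rfl)
        have h3 : (Wz.takeUntil u huW).length + (Wz.dropUntil u huW).length = Wz.length := by
          rw [← Walk.length_append, Walk.take_spec]
        have h4 : H.dist r z ≤ D := hDle z hzR
        refine ⟨hzR, ?_⟩
        omega
      · exfalso
        apply hnr
        refine reach_transfer Wz fun x hx hxT => ?_
        rcases hxT with rfl | rfl
        · exact huW hx
        · exact hvW hx
    -- show the from-r property for T = {u, v}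
    have hTgood : ∀ z ∈ R, z ∉ T → (Gs G (S \ T)).Reachable r z := by
      by_contra hbad
      push_neg at hbad
      obtain ⟨w, hwR, hwT, hwnr⟩ := hbad
      have hwF : w ∈ F := inner1 w hwR hwT hwnr
      have hwr : w ≠ r := by
        rintro rfl
        exact hwnr (Reachable.refl w)
      -- w has some neighbor
      obtain ⟨Ww, hWw⟩ := (hwR : H.Reachable r w).exists_walk_length_eq_dist
      have hWwlen : Ww.length ≠ 0 := by
        rw [hWw]
        intro h0
        exact hwr ((hwR : H.Reachable r w).dist_eq_zero_iff.mp h0).symm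
      obtain ⟨y₂, q₂, hy₂adj, _⟩ := exists_penult Ww hWwlen
      -- neighbors of w are exactly {u}
      have hNw : {y | y ∈ S ∧ G.Adj w y} = {u} := by
        apply Set.eq_singleton_iff_nonempty_unique_mem.mpr
        constructor
        · exact ⟨y₂, hy₂adj.2.2, hy₂adj.1⟩
        · rintro y ⟨hyS, hyadj⟩
          by_contra hyu
          have hyv : y ≠ v := fun h => (hadjF w hwF v hvF) (h ▸ hyadj)
          have hyT : y ∉ T := by
            intro hmem
            rcases hmem with h | h
            · exact hyu h
            · exact hyv h
          have hyR : y ∈ R := (hwR : H.Reachable r w).trans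
            (Adj.reachable ⟨hyadj, hRS w hwR, hyS⟩)
          have hynr : ¬ (Gs G (S \ T)).Reachable r y := by
            intro hry
            apply hwnr
            have hwST : w ∈ S \ T := ⟨hRS w hwR, hwT⟩
            have hyST : y ∈ S \ T := ⟨hyS, hyT⟩
            exact hry.trans (Adj.reachable ⟨hyadj.symm, hyST, hwST⟩)
          have hyF : y ∈ F := inner1 y hyR hyT hynr
          exact (hadjF w hwF y hyF) hyadj
      have hdSw : dS G S w = 1 := by rw [dS, hNw, Set.ncard_singleton]
      exact (hodd w hwF) (hdSw ▸ odd_one)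
    refine Or.inr (Or.inr ⟨u, huN.1, v, hvS, huN.2.symm, ?_⟩)
    refine HPgen T ?_ hTgood
    rintro z (rfl | rfl)
    exacts [huR, hvR]


lemma e2_comp_split {S : Set V} {r : V} (hr : r ∈ S) :
    e2 G S = e2 G (rS G S r) + e2 G (S \ rS G S r) := by
  classical
  set C := rS G S r with hC
  have hCS : C ⊆ S := rS_subset hr
  have hsplit : {p : V × V | G.Adj p.1 p.2 ∧ p.1 ∈ S ∧ p.2 ∈ S} =
      {p : V × V | G.Adj p.1 p.2 ∧ p.1 ∈ C ∧ p.2 ∈ C} ∪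
      {p : V × V | G.Adj p.1 p.2 ∧ p.1 ∈ S \ C ∧ p.2 ∈ S \ C} := by
    ext ⟨a, b⟩
    simp only [Set.mem_setOf_eq, Set.mem_union, Set.mem_diff]
    constructor
    · rintro ⟨hadj, ha, hb⟩
      by_cases haC : a ∈ C
      · have hbC : b ∈ C :=
          ((haC : (Gs G S).Reachable r a).trans (Adj.reachable ⟨hadj, ha, hb⟩) :
            (Gs G S).Reachable r b)
        exact Or.inl ⟨hadj, haC, hbC⟩
      · have hbC : b ∉ C := by
          intro hbC
          exact haC ((hbC : (Gs G S).Reachable r b).trans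
            (Adj.reachable ⟨hadj.symm, hb, ha⟩) : (Gs G S).Reachable r a)
        exact Or.inr ⟨hadj, ⟨ha, haC⟩, hb, hbC⟩
    · rintro (⟨hadj, ha, hb⟩ | ⟨hadj, ha, hb⟩)
      · exact ⟨hadj, hCS ha, hCS hb⟩
      · exact ⟨hadj, ha.1, hb.1⟩
  have hd : Disjoint {p : V × V | G.Adj p.1 p.2 ∧ p.1 ∈ C ∧ p.2 ∈ C}
      {p : V × V | G.Adj p.1 p.2 ∧ p.1 ∈ S \ C ∧ p.2 ∈ S \ C} := by
    rw [Set.disjoint_left]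
    rintro p ⟨_, h1, _⟩ ⟨_, h2, _⟩
    exact h2.2 h1
  rw [e2, hsplit, Set.ncard_union_eq hd (Set.toFinite _) (Set.toFinite _)]
  rfl

lemma e2_le_offdiag (C : Set V) : e2 G C ≤ C.ncard * C.ncard - C.ncard := by
  classical
  have hsub : {p : V × V | G.Adj p.1 p.2 ∧ p.1 ∈ C ∧ p.2 ∈ C} ⊆ ↑(C.toFinset.offDiag) := by
    rintro ⟨a, b⟩ ⟨hadj, ha, hb⟩
    simp only [Finset.coe_offDiag, Set.mem_offDiag, Finset.mem_coe, Set.mem_toFinset]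
    exact ⟨by simpa using ha, by simpa using hb, hadj.ne⟩
  calc e2 G C ≤ (↑(C.toFinset.offDiag) : Set (V × V)).ncard :=
        Set.ncard_le_ncard hsub (Set.toFinite _)
    _ = C.toFinset.offDiag.card := Set.ncard_coe_finset _
    _ = C.toFinset.card * C.toFinset.card - C.toFinset.card := Finset.offDiag_card _
    _ = C.ncard * C.ncard - C.ncard := by rw [Set.ncard_eq_toFinset_card' C]

lemma edgebound : ∀ (n : ℕ) (S : Set V), S.ncard = n →
    e2 G S ≤ (S.ncard - cS G S) * (S.ncard - cS G S + 1) := by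
  intro n
  induction n using Nat.strong_induction_on with
  | _ n IH =>
    intro S hn
    rcases Set.eq_empty_or_nonempty S with rfl | ⟨r, hr⟩
    · simp [e2]
    set C := rS G S r with hC
    have hCS : C ⊆ S := rS_subset hr
    have hrC : r ∈ C := mem_rS_self S r
    have hCne : 1 ≤ C.ncard := by
      have : 0 < C.ncard := (Set.ncard_pos (Set.toFinite _)).mpr ⟨r, hrC⟩
      omega
    have hdiff : (S \ C).ncard = S.ncard - C.ncard := Set.ncard_diff hCS (Set.toFinite _)
    have hCle : C.ncard ≤ S.ncard := Set.ncard_le_ncard hCS (Set.toFinite _)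
    have hlt : (S \ C).ncard < n := by omega
    have hIH := IH _ hlt (S \ C) rfl
    have hsplit := e2_comp_split (G := G) hr
    have hoff := e2_le_offdiag (G := G) C
    have hcdrop : cS G (S \ C) + 1 = cS G S := cS_drop hr
    have hcle : cS G (S \ C) ≤ (S \ C).ncard := cS_le_ncard _
    -- arithmetic
    set a := C.ncard
    set n' := (S \ C).ncard
    set c' := cS G (S \ C)
    have hk : S.ncard - cS G S = (n' - c') + (a - 1) := by omega
    rw [hsplit, hk]
    have h1 : e2 G C ≤ a * a - a := hoff
    set k' := n' - c'
    set b := a - 1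
    have hab : a = b + 1 := by omega
    have h2 : a * a - a = (b + 1) * b := by rw [hab]; ring_nf; omega
    have h3 : e2 G (S \ C) ≤ k' * (k' + 1) := hIH
    calc e2 G C + e2 G (S \ C) ≤ (b + 1) * b + k' * (k' + 1) := by omega
      _ ≤ (k' + b) * (k' + b + 1) := by nlinarith

lemma iso_rS {S : Set V} {v : V} (hv : v ∈ S) (hiso : ∀ y ∈ S, ¬ G.Adj v y) :
    rS G S v = {v} := by
  ext y
  simp only [Set.mem_singleton_iff]
  constructor
  · intro hy
    obtain ⟨w⟩ := (hy : (Gs G S).Reachable v y)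
    cases w with
    | nil => rfl
    | cons h p => exact absurd h.1 (hiso _ h.2.2)
  · intro h
    subst h
    exact Reachable.refl y

lemma dS_zero_of_iso {S A : Set V} {v : V} (hAS : A ⊆ S) (hiso : ∀ y ∈ S, ¬ G.Adj v y) :
    dS G A v = 0 := by
  rw [dS, Set.ncard_eq_zero (Set.toFinite _)]
  ext y
  simp only [Set.mem_setOf_eq, Set.mem_empty_iff_false, iff_false]
  rintro ⟨hyA, hyadj⟩
  exact hiso y (hAS hyA) hyadj

lemma main_ind : ∀ (n : ℕ) (S : Set V), S.ncard = n →
    ∃ A ⊆ S, e2 G S + S.ncard ≤ 4 * cutn G S A + cS G S := by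
  intro n
  induction n using Nat.strong_induction_on with
  | _ n IH =>
    intro S hn
    rcases Set.eq_empty_or_nonempty S with rfl | hne
    · refine ⟨∅, Set.empty_subset _, ?_⟩
      simp [e2, cutn, X]
    rcases struct S hne with ⟨v, hv, hiso⟩ | ⟨v, hv, hodd, hp⟩ | ⟨u, hu, v, hv, hadj, hp⟩
    · -- isolated vertex
      set S' := S \ {v} with hS'
      have hn' : S'.ncard = n - 1 := by
        rw [hS', Set.ncard_diff_singleton_of_mem hv, hn]
      have hnpos : 1 ≤ n := by
        rw [← hn]
        exact (Set.ncard_pos (Set.toFinite _)).mpr hne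
      obtain ⟨A', hA'sub, hA'⟩ := IH (n - 1) (by omega) S' hn'
      have hA'S : A' ⊆ S \ {v} := hA'sub
      refine ⟨A', hA'S.trans Set.diff_subset, ?_⟩
      have hcut : cutn G S A' = cutn G S' A' + dS G A' v := cutn_out hv hA'S
      have hd0 : dS G A' v = 0 :=
        dS_zero_of_iso (hA'S.trans Set.diff_subset) hiso
      have he2 : e2 G S = e2 G S' + 2 * dS G S' v := e2_remove hv
      have hd0' : dS G S' v = 0 := dS_zero_of_iso Set.diff_subset hiso
      have hcS : cS G S' + 1 = cS G S := by
        have := cS_drop (G := G) hv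
        rwa [iso_rS hv hiso] at this
      omega
    · -- odd degree non-cut vertex
      set S' := S \ {v} with hS'
      have hn' : S'.ncard = n - 1 := by
        rw [hS', Set.ncard_diff_singleton_of_mem hv, hn]
      have hnpos : 1 ≤ n := by
        rw [← hn]
        exact (Set.ncard_pos (Set.toFinite _)).mpr hne
      obtain ⟨A', hA'sub, hA'⟩ := IH (n - 1) (by omega) S' hn'
      have he2 : e2 G S = e2 G S' + 2 * dS G S' v := e2_remove hv
      have hdd : dS G S' v = dS G S v := dS_eq_diff v S
      have hcS : cS G S' ≤ cS G S := cS_mono_of_Hpres hp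
      have hsplit : dS G A' v + dS G (S' \ A') v = dS G S' v := dS_split v hA'sub
      have hcout : cutn G S A' = cutn G S' A' + dS G A' v := cutn_out hv hA'sub
      have hcin : cutn G S (A' ∪ {v}) = cutn G S' A' + dS G (S' \ A') v := cutn_in hv hA'sub
      obtain ⟨k, hk⟩ := hodd
      rcases le_total (dS G A' v) (dS G (S' \ A') v) with hle | hle
      · refine ⟨A' ∪ {v}, ?_, ?_⟩
        · rw [Set.union_subset_iff]
          exact ⟨hA'sub.trans Set.diff_subset, Set.singleton_subset_iff.mpr hv⟩
        · omega
      · refine ⟨A', hA'sub.trans Set.diff_subset, ?_⟩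
        omega
    · -- adjacent non-cut pair
      have huv : u ≠ v := hadj.ne
      set S'' := S \ {u, v} with hS''
      have hq1 : (S \ {v}) \ {u} = S'' := by
        ext z
        simp only [hS'', Set.mem_diff, Set.mem_singleton_iff, Set.mem_insert_iff]
        tauto
      have hq2 : (S \ {u}) \ {v} = S'' := by
        ext z
        simp only [hS'', Set.mem_diff, Set.mem_singleton_iff, Set.mem_insert_iff]
        tauto
      have hvS1 : v ∈ S \ {u} := ⟨hv, fun h => huv h.symm⟩
      have huS1 : u ∈ S \ {v} := ⟨hu, fun h => huv h⟩
      have huS'' : u ∉ S'' := fun h => h.2 (Or.inl rfl)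
      have hvS'' : v ∉ S'' := fun h => h.2 (Or.inr rfl)
      have hn'' : S''.ncard = n - 2 := by
        rw [← hq1, Set.ncard_diff_singleton_of_mem huS1,
          Set.ncard_diff_singleton_of_mem hv, hn]
        omega
      have hn2 : 2 ≤ n := by
        have h1 : (S \ {v}).ncard = n - 1 := by
          rw [Set.ncard_diff_singleton_of_mem hv, hn]
        have h2 : 0 < (S \ {v}).ncard := (Set.ncard_pos (Set.toFinite _)).mpr ⟨u, huS1⟩
        have h3 : 0 < n := by
          rw [← hn]
          exact (Set.ncard_pos (Set.toFinite _)).mpr hne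
        omega
      obtain ⟨A', hA'sub, hA'⟩ := IH (n - 2) (by omega) S'' hn''
      -- edge counting
      have he2a : e2 G S = e2 G (S \ {v}) + 2 * dS G (S \ {v}) v := e2_remove hv
      have he2b : e2 G (S \ {v}) = e2 G S'' + 2 * dS G S'' u := by
        have := e2_remove (G := G) huS1
        rwa [hq1] at this
      have hS1decomp : S'' ∪ {u} = S \ {v} := by
        rw [← hq1]
        ext z
        simp only [Set.mem_union, Set.mem_diff, Set.mem_singleton_iff]
        constructor
        · rintro (⟨h1, h2⟩ | rfl)
          · exact h1
          · exact huS1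
        · intro h
          by_cases hzu : z = u
          · exact Or.inr hzu
          · exact Or.inl ⟨h, hzu⟩
      have hdv : dS G (S \ {v}) v = dS G S'' v + 1 := by
        rw [← hS1decomp]
        exact dS_insert huS'' hadj.symm
      -- the two cut options
      have hA'S1 : A' ⊆ S \ {u} := by
        intro z hz
        have := hA'sub hz
        exact ⟨this.1, fun h => this.2 (by rw [h]; exact Or.inl rfl)⟩
      have hA'S'' : A' ⊆ S'' := hA'sub
      have hcut1 : cutn G S (A' ∪ {u}) = cutn G S'' A' + dS G A' v
          + (dS G (S'' \ A') u + 1) := by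
        have h1 : cutn G S (A' ∪ {u}) = cutn G (S \ {u}) A' + dS G ((S \ {u}) \ A') u :=
          cutn_in hu hA'S1
        have h2 : cutn G (S \ {u}) A' = cutn G ((S \ {u}) \ {v}) A' + dS G A' v := by
          apply cutn_out hvS1
          rw [hq2]
          exact hA'S''
        have h3 : (S \ {u}) \ A' = (S'' \ A') ∪ {v} := by
          ext z
          simp only [Set.mem_union, Set.mem_diff, Set.mem_singleton_iff, hS'',
            Set.mem_insert_iff]
          constructor
          · rintro ⟨⟨hzS, hzu⟩, hzA⟩
            by_cases hzv : z = v
            · exact Or.inr hzv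
            · exact Or.inl ⟨⟨hzS, by tauto⟩, hzA⟩
          · rintro (⟨⟨hzS, hz⟩, hzA⟩ | rfl)
            · exact ⟨⟨hzS, fun h => hz (Or.inl h)⟩, hzA⟩
            · exact ⟨⟨hv, fun h => huv h.symm⟩, fun h => hvS'' (hA'S'' h)⟩
        have h4 : dS G ((S \ {u}) \ A') u = dS G (S'' \ A') u + 1 := by
          rw [h3]
          apply dS_insert _ hadj
          rintro ⟨h, _⟩
          exact hvS'' h
        rw [h1, h2, hq2, h4]
      have hcut2 : cutn G S ((S'' \ A') ∪ {u}) = cutn G S'' A' + dS G (S'' \ A') v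
          + (dS G A' u + 1) := by
        have hB'S1 : S'' \ A' ⊆ S \ {u} := by
          intro z hz
          exact ⟨hz.1.1, fun h => huS'' (h ▸ hz.1)⟩
        have h1 : cutn G S ((S'' \ A') ∪ {u})
            = cutn G (S \ {u}) (S'' \ A') + dS G ((S \ {u}) \ (S'' \ A')) u :=
          cutn_in hu hB'S1
        have h2 : cutn G (S \ {u}) (S'' \ A') = cutn G ((S \ {u}) \ {v}) (S'' \ A')
            + dS G (S'' \ A') v := by
          apply cutn_out hvS1
          rw [hq2]
          exact Set.diff_subset
        have h2' : cutn G S'' (S'' \ A') = cutn G S'' A' := cutn_compl hA'S''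
        have h3 : (S \ {u}) \ (S'' \ A') = A' ∪ {v} := by
          ext z
          simp only [Set.mem_union, Set.mem_diff, Set.mem_singleton_iff, hS'',
            Set.mem_insert_iff]
          constructor
          · rintro ⟨⟨hzS, hzu⟩, hz⟩
            by_cases hzv : z = v
            · exact Or.inr hzv
            · left
              by_contra hzA
              exact hz ⟨⟨hzS, by tauto⟩, hzA⟩
          · rintro (hzA | rfl)
            · have hzS'' := hA'S'' hzA
              refine ⟨⟨hzS''.1, fun h => hzS''.2 (Or.inl h)⟩, fun h => h.2 hzA⟩
            · exact ⟨⟨hv, fun h => huv h.symm⟩, fun h => h.1.2 (Or.inr rfl)⟩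
        have h4 : dS G ((S \ {u}) \ (S'' \ A')) u = dS G A' u + 1 := by
          rw [h3]
          apply dS_insert _ hadj
          intro hvA
          exact hvS'' (hA'S'' hvA)
        rw [h1, h2, hq2, h2', h4]
      have hsplitv : dS G A' v + dS G (S'' \ A') v = dS G S'' v := dS_split v hA'S''
      have hsplitu : dS G A' u + dS G (S'' \ A') u = dS G S'' u := dS_split u hA'S''
      have hcS : cS G S'' ≤ cS G S := cS_mono_of_Hpres hp
      rcases le_total (cutn G S (A' ∪ {u})) (cutn G S ((S'' \ A') ∪ {u})) with hle | hle
      · refine ⟨(S'' \ A') ∪ {u}, ?_, ?_⟩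
        · rw [Set.union_subset_iff]
          exact ⟨(Set.diff_subset.trans Set.diff_subset), Set.singleton_subset_iff.mpr hu⟩
        · omega
      · refine ⟨A' ∪ {u}, ?_, ?_⟩
        · rw [Set.union_subset_iff]
          exact ⟨hA'sub.trans Set.diff_subset, Set.singleton_subset_iff.mpr hu⟩
        · omega

lemma e2_univ_eq : e2 G Set.univ = 2 * G.edgeSet.ncard := by
  classical
  have h1 : {p : V × V | G.Adj p.1 p.2 ∧ p.1 ∈ Set.univ ∧ p.2 ∈ Set.univ}
      = ↑(Finset.univ.filter fun ((x, y) : V × V) => G.Adj x y) := by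
    ext ⟨a, b⟩
    simp
  have h2 : e2 G Set.univ = (Finset.univ.filter fun ((x, y) : V × V) => G.Adj x y).card := by
    rw [e2, h1, Set.ncard_coe_finset]
  have h3 : 2 * G.edgeFinset.card = (Finset.univ.filter fun ((x, y) : V × V) => G.Adj x y).card :=
    G.two_mul_card_edgeFinset
  have h4 : G.edgeSet.ncard = G.edgeFinset.card := by
    rw [← G.coe_edgeFinset, Set.ncard_coe_finset]
  omega

lemma cutn_univ_eq (A : Set V) : cutn G Set.univ A = cutSize G A := by
  unfold cutn cutSize X
  congr 1
  ext ⟨a, b⟩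
  simp

lemma cutSize_le_maxCut (A : Set V) : cutSize G A ≤ maxCut G := by
  apply le_csSup
  · refine ⟨(Set.univ : Set (V × V)).ncard, ?_⟩
    rintro k ⟨B, rfl⟩
    exact Set.ncard_le_ncard (Set.subset_univ _) (Set.toFinite _)
  · exact ⟨A, rfl⟩

theorem stmt_2' :
    (G.edgeSet.ncard : ℝ) / 2 + (Real.sqrt (8 * G.edgeSet.ncard + 1) - 1) / 8
      ≤ (maxCut G : ℝ) := by
  classical
  obtain ⟨A, hAsub, hA⟩ := main_ind (Set.univ : Set V).ncard Set.univ rfl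
  set m := G.edgeSet.ncard with hm
  set n := (Set.univ : Set V).ncard with hn
  set c := cS G (Set.univ : Set V) with hc
  have he2 : e2 G Set.univ = 2 * m := e2_univ_eq
  have hcn : c ≤ n := cS_le_ncard _
  obtain ⟨k, hkeq⟩ : ∃ k, n = c + k := ⟨n - c, by omega⟩
  have heb : 2 * m ≤ k * (k + 1) := by
    have h := edgebound (G := G) (Set.univ : Set V).ncard (Set.univ : Set V) rfl
    rw [he2] at h
    have hnc : n - c = k := by omega
    rw [← hn, ← hc, hnc] at h
    exact h
  have hcut : 4 * maxCut G ≥ 2 * m + k := by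
    have h1 : cutn G Set.univ A ≤ maxCut G := by
      rw [cutn_univ_eq]
      exact cutSize_le_maxCut A
    omega
  -- real arithmetic
  have hsqrt : Real.sqrt (8 * m + 1) ≤ 2 * k + 1 := by
    have h1 : (8 * m + 1 : ℝ) ≤ ((2 * k + 1 : ℕ) : ℝ) ^ 2 := by
      have h0 : 8 * m + 1 ≤ (2 * k + 1) ^ 2 := by nlinarith [heb]
      exact_mod_cast h0
    calc Real.sqrt (8 * m + 1) ≤ Real.sqrt (((2 * k + 1 : ℕ) : ℝ) ^ 2) :=
          Real.sqrt_le_sqrt h1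
      _ = ((2 * k + 1 : ℕ) : ℝ) := Real.sqrt_sq (by positivity)
      _ = 2 * k + 1 := by push_cast; ring
  have hMk : (m : ℝ) / 2 + (k : ℝ) / 4 ≤ (maxCut G : ℝ) := by
    have : (2 * m + k : ℝ) ≤ 4 * (maxCut G : ℝ) := by
      exact_mod_cast hcut
    linarith
  have : (Real.sqrt (8 * m + 1) - 1) / 8 ≤ (k : ℝ) / 4 := by linarith
  calc (m : ℝ) / 2 + (Real.sqrt (8 * m + 1) - 1) / 8
      ≤ (m : ℝ) / 2 + (k : ℝ) / 4 := by linarith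
    _ ≤ (maxCut G : ℝ) := hMk

end Edwards

/-- Edwards' bound: every finite simple graph with `m` edges satisfies
`mc(G) ≥ m/2 + (√(8m+1) − 1)/8`. -/
theorem stmt_2 {V : Type*} [Fintype V] (G : SimpleGraph V) :
    (G.edgeSet.ncard : ℝ) / 2 + (Real.sqrt (8 * G.edgeSet.ncard + 1) - 1) / 8
      ≤ (maxCut G : ℝ) := Edwards.stmt_2' (G := G)
end

section
/- Let G be a graph and let {x^v : v ∈ V(G)} be nonzero vectors in ℝ^N. Let z be a uniformly random unit vector in ℝ^N, and define A = {v ∈ V(G) : ⟨x^v, z⟩ ≥ 0} and B = V(G) \ A. Then for each edge uv ∈ E(G), the probability that uv crosses the cut (A,B) equals (1/π)·arccos(⟨x^u,x^v⟩/(‖x^u‖·‖x^v‖)). -/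
open MeasureTheory

open Real Set Metric
theorem lintegral_comp_polarCoord_symm' (f : ℝ × ℝ → ENNReal) :
    (∫⁻ p in polarCoord.target, ENNReal.ofReal p.1 * f (polarCoord.symm p)) = ∫⁻ p, f p := by
  set B : ℝ × ℝ → ℝ × ℝ →L[ℝ] ℝ × ℝ := fun p =>
    LinearMap.toContinuousLinearMap (Matrix.toLin (Module.Basis.finTwoProd ℝ) (Module.Basis.finTwoProd ℝ)
      !![cos p.2, -p.1 * sin p.2; sin p.2, p.1 * cos p.2])
  have A : ∀ p ∈ polarCoord.target, HasFDerivWithinAt polarCoord.symm (B p) polarCoord.target p :=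
    fun p _ => (hasFDerivAt_polarCoord_symm p).hasFDerivWithinAt
  have B_det : ∀ p, (B p).det = p.1 := by
    intro p
    conv_rhs => rw [← one_mul p.1, ← cos_sq_add_sin_sq p.2]
    simp only [B, neg_mul, LinearMap.det_toContinuousLinearMap, LinearMap.det_toLin,
      Matrix.det_fin_two_of, sub_neg_eq_add]
    ring
  symm
  calc
    ∫⁻ p, f p = ∫⁻ p in polarCoord.source, f p := by
      rw [← setLIntegral_univ]
      exact (setLIntegral_congr polarCoord_source_ae_eq_univ.symm)
    _ = ∫⁻ p in polarCoord.symm '' polarCoord.target, f p := by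
      rw [polarCoord.symm_image_target_eq_source]
    _ = ∫⁻ p in polarCoord.target, ENNReal.ofReal |(B p).det| * f (polarCoord.symm p) := by
      exact lintegral_image_eq_lintegral_abs_det_fderiv_mul volume
        polarCoord.open_target.measurableSet A polarCoord.symm.injOn f
    _ = ∫⁻ p in polarCoord.target, ENNReal.ofReal p.1 * f (polarCoord.symm p) := by
      refine setLIntegral_congr_fun polarCoord.open_target.measurableSet
        (fun p hp => ?_)
      rw [B_det, abs_of_pos hp.1]

lemma cosneg {ψ : ℝ} (h1 : π/2 < ψ) (h2 : ψ < 3*π/2) : cos ψ < 0 :=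
  cos_neg_of_pi_div_two_lt_of_lt h1 (by linarith)

lemma cosneg' {ψ : ℝ} (h1 : -(3*π/2) < ψ) (h2 : ψ < -(π/2)) : cos ψ < 0 := by
  rw [← cos_neg]; exact cosneg (by linarith) (by linarith)

lemma cosnn {ψ : ℝ} (h1 : -(π/2) ≤ ψ) (h2 : ψ ≤ π/2) : 0 ≤ cos ψ :=
  cos_nonneg_of_mem_Icc ⟨h1, h2⟩

lemma cosnn' {ψ : ℝ} (h1 : -(2*π) < ψ) (h2 : ψ ≤ -(3*π/2)) : 0 ≤ cos ψ := by
  have : cos (ψ + 2*π) = cos ψ := by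
    rw [cos_add_two_pi]
  rw [← this]; exact cosnn (by nlinarith [pi_pos]) (by linarith [pi_pos])

lemma in_range {φ : ℝ} (h : φ ∈ Ioo (-π) π) (hc : 0 ≤ cos φ) : -(π/2) ≤ φ ∧ φ ≤ π/2 := by
  constructor
  · by_contra h'
    exact absurd hc (not_le.2 (cosneg' (by linarith [h.1, pi_pos]) (by linarith)))
  · by_contra h'
    exact absurd hc (not_le.2 (cosneg (by linarith) (by linarith [h.2, pi_pos])))

lemma ang_vol {θ : ℝ} (h0 : 0 < θ) (hπ : θ < π) :
    volume {φ : ℝ | φ ∈ Ioo (-π) π ∧ ¬(0 ≤ cos φ ↔ 0 ≤ cos (φ - θ))} =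
      ENNReal.ofReal (2*θ) := by
  have hpi := pi_pos
  have hS : {φ : ℝ | φ ∈ Ioo (-π) π ∧ ¬(0 ≤ cos φ ↔ 0 ≤ cos (φ - θ))} =
      Ico (-(π/2)) (θ - π/2) ∪
        ((Ioo (π/2) π ∩ Iic (θ + π/2)) ∪ (Ioo (-π) (-(π/2)) ∩ Iic (θ - 3*π/2))) := by
    ext φ
    simp only [mem_setOf_eq, mem_Ioo, mem_Ico, mem_union, mem_inter_iff, mem_Iic]
    constructor
    · rintro ⟨⟨hl, hr⟩, hbad⟩
      have hbad' : (0 ≤ cos φ ∧ ¬ 0 ≤ cos (φ - θ)) ∨ (0 ≤ cos (φ - θ) ∧ ¬ 0 ≤ cos φ) := by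
        by_cases h1 : 0 ≤ cos φ
        · exact Or.inl ⟨h1, fun h2 => hbad ⟨fun _ => h2, fun _ => h1⟩⟩
        · by_cases h2 : 0 ≤ cos (φ - θ)
          · exact Or.inr ⟨h2, h1⟩
          · exact absurd ⟨fun h => absurd h h1, fun h => absurd h h2⟩ hbad
      rcases hbad' with ⟨h1, h2⟩ | ⟨h2, h1⟩
      · -- 0 ≤ cos φ, ¬ 0 ≤ cos (φ - θ)
        obtain ⟨ha, hb⟩ := in_range ⟨hl, hr⟩ h1
        left
        refine ⟨ha, ?_⟩
        by_contra h'
        exact h2 (cosnn (by linarith) (by linarith))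
      · -- 0 ≤ cos (φ - θ), ¬ 0 ≤ cos φ
        right
        have hφ : (π/2 < φ ∧ φ < π) ∨ (-π < φ ∧ φ < -(π/2)) := by
          by_contra h'
          push_neg at h'
          rcases le_or_gt φ (π/2) with hle | hlt
          · rcases le_or_gt (-(π/2)) φ with hge | hlt2
            · exact h1 (cosnn hge hle)
            · exact absurd (h'.2 hl) (not_le.2 hlt2)
          · exact absurd (h'.1 hlt) (not_le.2 hr)
        rcases hφ with ⟨ha, hb⟩ | ⟨ha, hb⟩
        · left
          refine ⟨⟨ha, hb⟩, ?_⟩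
          by_contra h'
          push_neg at h'
          exact absurd h2 (not_le.2 (cosneg (by linarith) (by linarith)))
        · right
          refine ⟨⟨ha, hb⟩, ?_⟩
          by_contra h'
          push_neg at h'
          exact absurd h2 (not_le.2 (cosneg' (by linarith) (by linarith)))
    · rintro (⟨ha, hb⟩ | ⟨⟨ha, hb⟩, hc⟩ | ⟨⟨ha, hb⟩, hc⟩)
      · refine ⟨⟨by linarith, by linarith⟩, fun hiff =>
          absurd (hiff.mp (cosnn ha (by linarith)))
            (not_le.2 (cosneg' (by linarith) (by linarith)))⟩
      · refine ⟨⟨by linarith, hb⟩, fun hiff =>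
          absurd (hiff.mpr (cosnn (by linarith) (by linarith)))
            (not_le.2 (cosneg ha (by linarith)))⟩
      · refine ⟨⟨ha, by linarith⟩, fun hiff =>
          absurd (hiff.mpr (cosnn' (by linarith) (by linarith)))
            (not_le.2 (cosneg' (by linarith) hb))⟩
  rw [hS]
  have hd1 : Disjoint (Ico (-(π/2)) (θ - π/2))
      ((Ioo (π/2) π ∩ Iic (θ + π/2)) ∪ (Ioo (-π) (-(π/2)) ∩ Iic (θ - 3*π/2))) := by
    rw [disjoint_left]
    rintro φ ⟨ha, hb⟩ (⟨⟨hc, _⟩, _⟩ | ⟨⟨_, hc⟩, _⟩) <;> linarith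
  have hd2 : Disjoint (Ioo (π/2) π ∩ Iic (θ + π/2)) (Ioo (-π) (-(π/2)) ∩ Iic (θ - 3*π/2)) := by
    rw [disjoint_left]
    rintro φ ⟨⟨ha, _⟩, _⟩ ⟨⟨_, hb⟩, _⟩; linarith
  rw [measure_union hd1 (((measurableSet_Ioo.inter measurableSet_Iic).union
    (measurableSet_Ioo.inter measurableSet_Iic))),
    measure_union hd2 (measurableSet_Ioo.inter measurableSet_Iic)]
  have e1 : volume (Ico (-(π/2)) (θ - π/2)) = ENNReal.ofReal θ := by
    rw [Real.volume_Ico]; ring_nf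
  have e23 : volume (Ioo (π/2) π ∩ Iic (θ + π/2)) +
      volume (Ioo (-π) (-(π/2)) ∩ Iic (θ - 3*π/2)) = ENNReal.ofReal θ := by
    rcases lt_or_ge θ (π/2) with hc | hc
    · have : Ioo (π/2) π ∩ Iic (θ + π/2) = Ioc (π/2) (θ + π/2) := by
        ext φ
        simp only [mem_inter_iff, mem_Ioo, mem_Iic, mem_Ioc]
        constructor
        · rintro ⟨⟨h1, h2⟩, h3⟩; exact ⟨h1, h3⟩
        · rintro ⟨h1, h2⟩; exact ⟨⟨h1, by linarith⟩, h2⟩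
      have h2 : Ioo (-π) (-(π/2)) ∩ Iic (θ - 3*π/2) = ∅ := by
        rw [eq_empty_iff_forall_notMem]
        rintro φ ⟨⟨h1, _⟩, h3⟩
        rw [mem_Iic] at h3; linarith
      rw [this, h2, measure_empty, add_zero, Real.volume_Ioc]; ring_nf
    · have h1 : Ioo (π/2) π ∩ Iic (θ + π/2) = Ioo (π/2) π := by
        rw [inter_eq_left]
        rintro φ ⟨_, h2⟩; simp only [mem_Iic]; linarith
      have h2 : Ioo (-π) (-(π/2)) ∩ Iic (θ - 3*π/2) = Ioc (-π) (θ - 3*π/2) := by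
        ext φ
        simp only [mem_inter_iff, mem_Ioo, mem_Iic, mem_Ioc]
        constructor
        · rintro ⟨⟨ha, _⟩, h3⟩; exact ⟨ha, h3⟩
        · rintro ⟨ha, h3⟩; exact ⟨⟨ha, by linarith⟩, h3⟩
      rw [h1, h2, Real.volume_Ioo, Real.volume_Ioc, ← ENNReal.ofReal_add (by linarith) (by linarith)]
      ring_nf
  rw [e1, e23, ← ENNReal.ofReal_add (by linarith) (by linarith)]
  ring_nf

lemma polar_cone (g : ℝ → ENNReal) (hg : Measurable g) (W : Set (ℝ × ℝ))
    (hWm : MeasurableSet W) (hW : ∀ r : ℝ, 0 < r → ∀ a b : ℝ, ((r*a, r*b) ∈ W ↔ (a, b) ∈ W)) :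
    ∫⁻ p : ℝ × ℝ, W.indicator (fun q => g (q.1^2 + q.2^2)) p =
      volume {φ : ℝ | φ ∈ Ioo (-π) π ∧ (cos φ, sin φ) ∈ W} *
        ∫⁻ r in Ioi (0:ℝ), ENNReal.ofReal r * g (r^2) := by
  have hA : MeasurableSet {φ : ℝ | (cos φ, sin φ) ∈ W} :=
    (continuous_cos.prodMk continuous_sin).measurable hWm
  rw [← lintegral_comp_polarCoord_symm' fun p => W.indicator (fun q => g (q.1^2 + q.2^2)) p,
    polarCoord_target]
  have hcongr : ∫⁻ p in Ioi (0:ℝ) ×ˢ Ioo (-π) π,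
      ENNReal.ofReal p.1 * W.indicator (fun q => g (q.1^2 + q.2^2)) (polarCoord.symm p) =
      ∫⁻ p in Ioi (0:ℝ) ×ˢ Ioo (-π) π,
      ({φ : ℝ | (cos φ, sin φ) ∈ W}.indicator (fun _ => (1:ENNReal)) p.2) *
        (ENNReal.ofReal p.1 * g (p.1^2)) := by
    refine setLIntegral_congr_fun (measurableSet_Ioi.prod measurableSet_Ioo)
      (fun p hp => ?_)
    have hp1 : 0 < p.1 := hp.1
    have hmem : polarCoord.symm p ∈ W ↔ (cos p.2, sin p.2) ∈ W := by
      rw [polarCoord_symm_apply]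
      exact hW p.1 hp1 _ _
    have hsq : (p.1 * cos p.2)^2 + (p.1 * sin p.2)^2 = p.1^2 := by
      nlinarith [sin_sq_add_cos_sq p.2]
    by_cases hmem' : (cos p.2, sin p.2) ∈ W
    · rw [Set.indicator_of_mem (hmem.mpr hmem'),
        Set.indicator_of_mem (show p.2 ∈ {φ : ℝ | (cos φ, sin φ) ∈ W} from hmem'),
        polarCoord_symm_apply]
      simp [hsq]
    · rw [Set.indicator_of_notMem (fun h => hmem' (hmem.mp h)),
        Set.indicator_of_notMem (show p.2 ∉ {φ : ℝ | (cos φ, sin φ) ∈ W} from hmem')]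
      simp
  rw [hcongr, Measure.volume_eq_prod, ← Measure.prod_restrict,
    lintegral_prod _ (Measurable.aemeasurable (by
      exact ((measurable_const.indicator hA).comp measurable_snd).mul
        ((ENNReal.measurable_ofReal.comp measurable_fst).mul
          (hg.comp ((measurable_fst.pow_const 2))))))]
  have hinner : ∀ x : ℝ, ∫⁻ y in Ioo (-π) π,
      ({φ : ℝ | (cos φ, sin φ) ∈ W}.indicator (fun _ => (1:ENNReal)) y) *
        (ENNReal.ofReal x * g (x^2)) =
      volume {φ : ℝ | φ ∈ Ioo (-π) π ∧ (cos φ, sin φ) ∈ W} * (ENNReal.ofReal x * g (x^2)) := by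
    intro x
    rw [lintegral_mul_const _ (measurable_const.indicator hA),
      lintegral_indicator_const hA, one_mul, Measure.restrict_apply hA]
    congr 1
    rw [Set.inter_comm]
    rfl
  calc ∫⁻ x in Ioi (0:ℝ), ∫⁻ y in Ioo (-π) π,
        ({φ : ℝ | (cos φ, sin φ) ∈ W}.indicator (fun _ => (1:ENNReal)) y) *
          (ENNReal.ofReal x * g (x^2)) ∂volume ∂volume
      = ∫⁻ x in Ioi (0:ℝ),
          volume {φ : ℝ | φ ∈ Ioo (-π) π ∧ (cos φ, sin φ) ∈ W} *
            (ENNReal.ofReal x * g (x^2)) := lintegral_congr fun x => hinner x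
    _ = _ := lintegral_const_mul _ (by fun_prop)

lemma wedge_measurable (c s : ℝ) :
    MeasurableSet {q : ℝ × ℝ | ¬(0 ≤ q.1 ↔ 0 ≤ c * q.1 + s * q.2)} := by
  have h1 : MeasurableSet {q : ℝ × ℝ | 0 ≤ q.1} := measurableSet_le measurable_const measurable_fst
  have h2 : MeasurableSet {q : ℝ × ℝ | 0 ≤ c * q.1 + s * q.2} :=
    measurableSet_le measurable_const
      ((measurable_fst.const_mul c).add (measurable_snd.const_mul s))
  have : {q : ℝ × ℝ | ¬(0 ≤ q.1 ↔ 0 ≤ c * q.1 + s * q.2)} =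
      ({q : ℝ × ℝ | 0 ≤ q.1} ∩ {q : ℝ × ℝ | 0 ≤ c * q.1 + s * q.2}ᶜ) ∪
      ({q : ℝ × ℝ | 0 ≤ q.1}ᶜ ∩ {q : ℝ × ℝ | 0 ≤ c * q.1 + s * q.2}) := by
    ext q; simp only [mem_union, mem_inter_iff, mem_compl_iff, mem_setOf_eq]; tauto
  rw [this]
  exact ((h1.inter h2.compl).union (h1.compl.inter h2))

lemma K2 {θ : ℝ} (h0 : 0 < θ) (hπ : θ < π) (g : ℝ → ENNReal) (hg : Measurable g) :
    ∫⁻ p : ℝ × ℝ, ({q : ℝ × ℝ | ¬(0 ≤ q.1 ↔ 0 ≤ cos θ * q.1 + sin θ * q.2)}).indicator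
        (fun q => g (q.1^2 + q.2^2)) p
      = ENNReal.ofReal (θ/π) * ∫⁻ p : ℝ × ℝ, g (p.1^2 + p.2^2) := by
  have hpi := pi_pos
  set W : Set (ℝ × ℝ) := {q : ℝ × ℝ | ¬(0 ≤ q.1 ↔ 0 ≤ cos θ * q.1 + sin θ * q.2)} with hWdef
  have hW : ∀ r : ℝ, 0 < r → ∀ a b : ℝ, ((r*a, r*b) ∈ W ↔ (a, b) ∈ W) := by
    intro r hr a b
    have e1 : (0 ≤ r*a) ↔ (0 ≤ a) := mul_nonneg_iff_of_pos_left hr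
    have e2 : (0 ≤ cos θ * (r*a) + sin θ * (r*b)) ↔ (0 ≤ cos θ * a + sin θ * b) := by
      have : cos θ * (r*a) + sin θ * (r*b) = r * (cos θ * a + sin θ * b) := by ring
      rw [this, mul_nonneg_iff_of_pos_left hr]
    simp only [hWdef, mem_setOf_eq, e1, e2]
  have huniv : ∫⁻ p : ℝ × ℝ, g (p.1^2 + p.2^2) =
      ENNReal.ofReal (2*π) * ∫⁻ r in Ioi (0:ℝ), ENNReal.ofReal r * g (r^2) := by
    have h := polar_cone g hg univ MeasurableSet.univ (fun _ _ _ _ => Iff.rfl)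
    have hs : {φ : ℝ | φ ∈ Ioo (-π) π ∧ (cos φ, sin φ) ∈ univ} = Ioo (-π) π := by
      ext φ; simp
    rw [hs, Real.volume_Ioo, indicator_univ] at h
    rw [h]
    congr 2
    ring
  have hang : volume {φ : ℝ | φ ∈ Ioo (-π) π ∧ (cos φ, sin φ) ∈ W} = ENNReal.ofReal (2*θ) := by
    rw [← ang_vol h0 hπ]
    congr 1
    ext φ
    simp only [hWdef, mem_setOf_eq, cos_sub]
    constructor
    · rintro ⟨h1, h2⟩
      exact ⟨h1, by rw [show cos φ * cos θ + sin φ * sin θ = cos θ * cos φ + sin θ * sin φ by ring]; exact h2⟩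
    · rintro ⟨h1, h2⟩
      exact ⟨h1, by rw [show cos θ * cos φ + sin θ * sin φ = cos φ * cos θ + sin φ * sin θ by ring]; exact h2⟩
  rw [polar_cone g hg W (wedge_measurable _ _) hW, hang, huniv, ← mul_assoc,
    ← ENNReal.ofReal_mul (by positivity)]
  congr 2
  field_simp

noncomputable def g0 (k : ℕ) (r : ℝ) : ENNReal := volume {z : Fin k → ℝ | ∑ j, (z j)^2 < 1 - r}

lemma g0_antitone (k : ℕ) : Antitone (g0 k) := by
  intro r s hrs
  apply measure_mono
  intro z hz
  simp only [mem_setOf_eq] at *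
  linarith

lemma g0_measurable (k : ℕ) : Measurable (g0 k) := (g0_antitone k).measurable

lemma K_pi' (k : ℕ) (W : Set (ℝ × ℝ)) (hWm : MeasurableSet W)
    (i0 i1 : Fin (2+k)) (hi0 : (i0 : ℕ) = 0) (hi1 : (i1 : ℕ) = 1) :
    volume {y : Fin (2+k) → ℝ | (y i0, y i1) ∈ W ∧ ∑ i, (y i)^2 < 1} =
      ∫⁻ p : ℝ × ℝ, W.indicator (fun q => g0 k (q.1^2 + q.2^2)) p := by
  classical
  set Φ : ((ℝ × ℝ) × (Fin k → ℝ)) ≃ᵐ (Fin (2+k) → ℝ) :=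
    (MeasurableEquiv.finTwoArrow.symm.prodCongr (MeasurableEquiv.refl _)).trans
      ((MeasurableEquiv.sumPiEquivProdPi (fun _ : Fin 2 ⊕ Fin k => ℝ)).symm.trans
        (MeasurableEquiv.piCongrLeft (fun _ : Fin (2+k) => ℝ) finSumFinEquiv)) with hΦdef
  have hmp : MeasurePreserving Φ volume volume := by
    have m1 : MeasurePreserving
        ((MeasurableEquiv.finTwoArrow : (Fin 2 → ℝ) ≃ᵐ ℝ × ℝ).symm.prodCongr (MeasurableEquiv.refl (Fin k → ℝ)))
        volume volume := by
      have := ((volume_preserving_finTwoArrow ℝ).symm).prod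
        (MeasurePreserving.id (volume : Measure (Fin k → ℝ)))
      rw [Measure.volume_eq_prod]
      exact this
    exact ((volume_measurePreserving_piCongrLeft (fun _ : Fin (2+k) => ℝ) finSumFinEquiv).comp
      (volume_measurePreserving_sumPiEquivProdPi_symm (fun _ : Fin 2 ⊕ Fin k => ℝ))).comp m1
  have key : ∀ (p : ℝ × ℝ) (z : Fin k → ℝ) (j : Fin 2 ⊕ Fin k),
      Φ (p, z) (finSumFinEquiv j) = Sum.elim (fun i => (![p.1, p.2] : Fin 2 → ℝ) i) z j := by
    intro p z j
    rw [hΦdef]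
    simp only [MeasurableEquiv.trans_apply]
    rw [MeasurableEquiv.piCongrLeft_apply_apply]
    cases j <;> rfl
  have hcoord : ∀ (p : ℝ × ℝ) (z : Fin k → ℝ),
      Φ (p, z) i0 = p.1 ∧ Φ (p, z) i1 = p.2 ∧
        ∑ i, (Φ (p, z) i)^2 = p.1^2 + p.2^2 + ∑ j, (z j)^2 := by
    intro p z
    have h0 : i0 = finSumFinEquiv (Sum.inl 0) := by
      apply Fin.ext
      simp [hi0]
    have h1 : i1 = finSumFinEquiv (Sum.inl 1) := by
      apply Fin.ext
      simp [hi1]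
    refine ⟨by rw [h0, key]; rfl, by rw [h1, key]; rfl, ?_⟩
    rw [← Equiv.sum_comp finSumFinEquiv (fun i => (Φ (p, z) i)^2)]
    simp only [key]
    rw [Fintype.sum_sum_type]
    simp [Fin.sum_univ_two]
  have hset : Φ ⁻¹' {y : Fin (2+k) → ℝ | (y i0, y i1) ∈ W ∧ ∑ i, (y i)^2 < 1} =
      {pz : (ℝ × ℝ) × (Fin k → ℝ) | pz.1 ∈ W ∧ pz.1.1^2 + pz.1.2^2 + ∑ j, (pz.2 j)^2 < 1} := by
    ext ⟨p, z⟩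
    obtain ⟨c0, c1, cs⟩ := hcoord p z
    simp only [mem_preimage, mem_setOf_eq, c0, c1, cs]
  have hsum_meas : Measurable fun z : Fin k → ℝ => ∑ j, (z j)^2 :=
    Finset.measurable_sum _ fun j _ => (measurable_pi_apply j).pow_const 2
  have hTm : MeasurableSet
      {pz : (ℝ × ℝ) × (Fin k → ℝ) | pz.1 ∈ W ∧ pz.1.1^2 + pz.1.2^2 + ∑ j, (pz.2 j)^2 < 1} := by
    have he : {pz : (ℝ × ℝ) × (Fin k → ℝ) | pz.1 ∈ W ∧ pz.1.1^2 + pz.1.2^2 + ∑ j, (pz.2 j)^2 < 1}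
        = (Prod.fst ⁻¹' W) ∩ {pz : (ℝ × ℝ) × (Fin k → ℝ) |
            pz.1.1^2 + pz.1.2^2 + ∑ j, (pz.2 j)^2 < 1} := rfl
    rw [he]
    refine (hWm.preimage measurable_fst).inter
      (measurableSet_lt (f := fun pz : (ℝ × ℝ) × (Fin k → ℝ) =>
        pz.1.1^2 + pz.1.2^2 + ∑ j, (pz.2 j)^2) ?_ measurable_const)
    exact (((measurable_fst.fst.pow_const 2).add (measurable_fst.snd.pow_const 2)).add
      (hsum_meas.comp measurable_snd))
  have hSm : MeasurableSet {y : Fin (2+k) → ℝ | (y i0, y i1) ∈ W ∧ ∑ i, (y i)^2 < 1} := by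
    have he : {y : Fin (2+k) → ℝ | (y i0, y i1) ∈ W ∧ ∑ i, (y i)^2 < 1} =
        ((fun y : Fin (2+k) → ℝ => (y i0, y i1)) ⁻¹' W) ∩
          {y : Fin (2+k) → ℝ | ∑ i, (y i)^2 < 1} := rfl
    rw [he]
    refine (hWm.preimage ((measurable_pi_apply i0).prodMk (measurable_pi_apply i1))).inter
      (measurableSet_lt (Finset.measurable_sum _ fun i _ => (measurable_pi_apply i).pow_const 2)
        measurable_const)
  rw [← hmp.measure_preimage hSm.nullMeasurableSet, hset, Measure.volume_eq_prod,
    Measure.prod_apply hTm]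
  refine lintegral_congr fun p => ?_
  by_cases hp : p ∈ W
  · rw [Set.indicator_of_mem hp]
    have : Prod.mk p ⁻¹' {pz : (ℝ × ℝ) × (Fin k → ℝ) |
        pz.1 ∈ W ∧ pz.1.1^2 + pz.1.2^2 + ∑ j, (pz.2 j)^2 < 1} =
        {z : Fin k → ℝ | ∑ j, (z j)^2 < 1 - (p.1^2 + p.2^2)} := by
      ext z
      simp only [mem_preimage, mem_setOf_eq, hp, true_and]
      constructor <;> intro h <;> linarith
    rw [this]
    rfl
  · rw [Set.indicator_of_notMem hp]
    have : Prod.mk p ⁻¹' {pz : (ℝ × ℝ) × (Fin k → ℝ) |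
        pz.1 ∈ W ∧ pz.1.1^2 + pz.1.2^2 + ∑ j, (pz.2 j)^2 < 1} = ∅ := by
      ext z
      simp only [mem_preimage, mem_setOf_eq, hp, false_and, mem_empty_iff_false]
    rw [this, measure_empty]


lemma K_pi (k : ℕ) {θ : ℝ} (h0 : 0 < θ) (hπ : θ < π)
    (i0 i1 : Fin (2+k)) (hi0 : (i0 : ℕ) = 0) (hi1 : (i1 : ℕ) = 1) :
    volume {y : Fin (2+k) → ℝ |
        ¬(0 ≤ y i0 ↔ 0 ≤ cos θ * y i0 + sin θ * y i1) ∧ ∑ i, (y i)^2 < 1} =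
      ENNReal.ofReal (θ/π) * volume {y : Fin (2+k) → ℝ | ∑ i, (y i)^2 < 1} := by
  have e1 : {y : Fin (2+k) → ℝ |
      ¬(0 ≤ y i0 ↔ 0 ≤ cos θ * y i0 + sin θ * y i1) ∧ ∑ i, (y i)^2 < 1} =
      {y : Fin (2+k) → ℝ |
        (y i0, y i1) ∈ {q : ℝ × ℝ | ¬(0 ≤ q.1 ↔ 0 ≤ cos θ * q.1 + sin θ * q.2)} ∧
          ∑ i, (y i)^2 < 1} := rfl
  have e2 : {y : Fin (2+k) → ℝ | ∑ i, (y i)^2 < 1} =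
      {y : Fin (2+k) → ℝ | (y i0, y i1) ∈ (univ : Set (ℝ × ℝ)) ∧ ∑ i, (y i)^2 < 1} := by
    ext y; simp
  rw [e1, e2, K_pi' k _ (wedge_measurable _ _) i0 i1 hi0 hi1,
    K_pi' k univ MeasurableSet.univ i0 i1 hi0 hi1, K2 h0 hπ (g0 k) (g0_measurable k)]
  simp only [indicator_univ]

lemma K_E {N : ℕ} (a b : EuclideanSpace ℝ (Fin N)) (ha : ‖a‖ = 1) (hb : ‖b‖ = 1)
    (hab : (inner ℝ a b : ℝ) = 0) {θ : ℝ} (h0 : 0 < θ) (hπ : θ < π) :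
    volume ({y : EuclideanSpace ℝ (Fin N) |
        ¬(0 ≤ (inner ℝ a y : ℝ) ↔ 0 ≤ cos θ * (inner ℝ a y : ℝ) + sin θ * (inner ℝ b y : ℝ))}
        ∩ Metric.ball 0 1)
      = ENNReal.ofReal (θ/π) * volume (Metric.ball (0 : EuclideanSpace ℝ (Fin N)) 1) := by
  classical
  -- a, b are orthonormal, hence N ≥ 2
  have haa : (inner ℝ a a : ℝ) = 1 := by
    rw [real_inner_self_eq_norm_mul_norm, ha]; norm_num
  have hbb : (inner ℝ b b : ℝ) = 1 := by
    rw [real_inner_self_eq_norm_mul_norm, hb]; norm_num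
  have hba : (inner ℝ b a : ℝ) = 0 := by rw [real_inner_comm]; exact hab
  have hon : Orthonormal ℝ (![a, b]) := by
    rw [orthonormal_iff_ite]
    intro i j
    fin_cases i <;> fin_cases j <;>
      simp only [Matrix.cons_val_zero, Matrix.cons_val_one, Matrix.head_cons] <;>
      simp [haa, hbb, hab, hba, Fin.ext_iff, ha, hb]
  have hN : 2 ≤ N := by
    have := hon.linearIndependent.fintype_card_le_finrank
    simpa [finrank_euclideanSpace_fin] using this
  obtain ⟨k, rfl⟩ : ∃ k, N = 2 + k := ⟨N - 2, by omega⟩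
  set i0 : Fin (2+k) := ⟨0, by omega⟩
  set i1 : Fin (2+k) := ⟨1, by omega⟩
  -- extend to an orthonormal basis
  set v : Fin (2+k) → EuclideanSpace ℝ (Fin (2+k)) := fun i => if i = i0 then a else b with hv
  have hres : Orthonormal ℝ (({i0, i1} : Set (Fin (2+k))).restrict v) := by
    rw [orthonormal_iff_ite]
    rintro ⟨i, hi⟩ ⟨j, hj⟩
    have hne : i0 ≠ i1 := by simp [i0, i1, Fin.ext_iff]
    dsimp only [Set.restrict]
    rcases hi with rfl | rfl <;> rcases hj with rfl | rfl <;>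
      simp [hv, hne, hne.symm, Subtype.ext_iff, haa, hbb, hab, hba, ha, hb]
  obtain ⟨B, hB⟩ := hres.exists_orthonormalBasis_extension_of_card_eq
    (by simp [finrank_euclideanSpace_fin]) 
  have hB0 : B i0 = a := by
    have := hB i0 (by simp)
    simpa [hv] using this
  have hB1 : B i1 = b := by
    have hne : i1 ≠ i0 := by simp [i0, i1, Fin.ext_iff]
    have := hB i1 (by simp)
    simpa [hv, hne] using this
  -- transport to coordinates
  have hrepa : ∀ y : EuclideanSpace ℝ (Fin (2+k)), (inner ℝ a y : ℝ) = B.repr y i0 := by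
    intro y; rw [B.repr_apply_apply, hB0]
  have hrepb : ∀ y : EuclideanSpace ℝ (Fin (2+k)), (inner ℝ b y : ℝ) = B.repr y i1 := by
    intro y; rw [B.repr_apply_apply, hB1]
  have norm_sq : ∀ x : EuclideanSpace ℝ (Fin (2+k)), ‖x‖^2 = ∑ i, (x i)^2 := by
    intro x
    rw [EuclideanSpace.norm_eq, Real.sq_sqrt (by positivity)]
    congr 1
    ext i
    rw [Real.norm_eq_abs, sq_abs]
  have hball : ∀ x : EuclideanSpace ℝ (Fin (2+k)), x ∈ Metric.ball (0 : EuclideanSpace ℝ (Fin (2+k))) 1 ↔ ∑ i, (x i)^2 < 1 := by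
    intro x
    rw [Metric.mem_ball, dist_zero_right, ← norm_sq]
    constructor <;> intro h <;> nlinarith [norm_nonneg x]
  set U : Set (Fin (2+k) → ℝ) := {w : Fin (2+k) → ℝ |
    ¬(0 ≤ w i0 ↔ 0 ≤ cos θ * w i0 + sin θ * w i1) ∧ ∑ i, (w i)^2 < 1} with hU
  set Uball : Set (Fin (2+k) → ℝ) := {w : Fin (2+k) → ℝ | ∑ i, (w i)^2 < 1} with hUball
  set F : EuclideanSpace ℝ (Fin (2+k)) → (Fin (2+k) → ℝ) :=
    fun y => (MeasurableEquiv.toLp 2 (Fin (2+k) → ℝ)).symm (B.repr y) with hF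
  have hmp : MeasurePreserving F volume volume :=
    (EuclideanSpace.volume_preserving_symm_measurableEquiv_toLp (Fin (2+k))).comp
      B.measurePreserving_repr
  have hFc : ∀ (y : EuclideanSpace ℝ (Fin (2+k))) (i : Fin (2+k)), F y i = B.repr y i :=
    fun y i => rfl
  have hsum_meas : Measurable fun w : Fin (2+k) → ℝ => ∑ i, (w i)^2 :=
    Finset.measurable_sum _ fun i _ => (measurable_pi_apply i).pow_const 2
  have hUm : MeasurableSet U := by
    have he : U = ((fun w : Fin (2+k) → ℝ => (w i0, w i1)) ⁻¹'
        {q : ℝ × ℝ | ¬(0 ≤ q.1 ↔ 0 ≤ cos θ * q.1 + sin θ * q.2)}) ∩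
        {w : Fin (2+k) → ℝ | ∑ i, (w i)^2 < 1} := rfl
    rw [he]
    exact ((wedge_measurable _ _).preimage
      ((measurable_pi_apply i0).prodMk (measurable_pi_apply i1))).inter
      (measurableSet_lt hsum_meas measurable_const)
  have hUballm : MeasurableSet Uball := measurableSet_lt hsum_meas measurable_const
  have hsums : ∀ y : EuclideanSpace ℝ (Fin (2+k)),
      ∑ i, (B.repr y i)^2 = ∑ i, (y i)^2 := by
    intro y
    rw [← norm_sq, ← norm_sq, B.repr.norm_map]
  have hset1 : {y : EuclideanSpace ℝ (Fin (2+k)) |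
      ¬(0 ≤ (inner ℝ a y : ℝ) ↔ 0 ≤ cos θ * (inner ℝ a y : ℝ) + sin θ * (inner ℝ b y : ℝ))}
      ∩ Metric.ball 0 1 = F ⁻¹' U := by
    ext y
    simp only [mem_inter_iff, mem_setOf_eq, mem_preimage, hU, hFc, hrepa y, hrepb y, hball y,
      hsums y]
  have hset2 : Metric.ball (0 : EuclideanSpace ℝ (Fin (2+k))) 1 = F ⁻¹' Uball := by
    ext y
    simp only [mem_preimage, hUball, mem_setOf_eq, hball y, hFc, hsums y]
  rw [hset1, hset2, hmp.measure_preimage hUm.nullMeasurableSet,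
    hmp.measure_preimage hUballm.nullMeasurableSet]
  exact K_pi k h0 hπ i0 i1 rfl rfl

lemma bridge {N : ℕ} (C : Set (EuclideanSpace ℝ (Fin N))) (hCm : MeasurableSet C)
    (hcone : ∀ r : ℝ, 0 < r → ∀ y, (r • y ∈ C ↔ y ∈ C)) :
    (volume : Measure (EuclideanSpace ℝ (Fin N))).toSphere
        (((↑) : sphere (0 : EuclideanSpace ℝ (Fin N)) 1 → EuclideanSpace ℝ (Fin N)) ⁻¹' C) =
      N * volume ((C ∩ ball (0 : EuclideanSpace ℝ (Fin N)) 1) \ {0}) := by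
  rw [Measure.toSphere_apply' _ (hCm.preimage measurable_subtype_coe)]
  rw [show (Module.finrank ℝ (EuclideanSpace ℝ (Fin N))) = N from finrank_euclideanSpace_fin]
  congr 1
  have himg : ((↑) : sphere (0 : EuclideanSpace ℝ (Fin N)) 1 → EuclideanSpace ℝ (Fin N)) ''
      (((↑) : sphere (0 : EuclideanSpace ℝ (Fin N)) 1 → EuclideanSpace ℝ (Fin N)) ⁻¹' C) =
      C ∩ sphere (0 : EuclideanSpace ℝ (Fin N)) 1 := by
    rw [Subtype.image_preimage_coe, Set.inter_comm]
  rw [himg]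
  congr 1
  ext y
  rw [Set.mem_smul]
  constructor
  · rintro ⟨r, hr, z, ⟨hzC, hzs⟩, rfl⟩
    rw [mem_sphere_zero_iff_norm] at hzs
    have hz0 : z ≠ 0 := by
      intro h; rw [h, norm_zero] at hzs; norm_num at hzs
    refine ⟨⟨(hcone r hr.1 z).mpr hzC, ?_⟩, ?_⟩
    · rw [mem_ball_zero_iff, norm_smul, hzs, mul_one, Real.norm_eq_abs, abs_of_pos hr.1]
      exact hr.2
    · simp only [mem_singleton_iff]
      exact smul_ne_zero (ne_of_gt hr.1) hz0
  · rintro ⟨⟨hyC, hyb⟩, hy0⟩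
    simp only [mem_singleton_iff] at hy0
    rw [mem_ball_zero_iff] at hyb
    have hn : 0 < ‖y‖ := norm_pos_iff.mpr hy0
    refine ⟨‖y‖, ⟨hn, hyb⟩, ‖y‖⁻¹ • y, ⟨?_, ?_⟩, ?_⟩
    · exact (hcone _ (inv_pos.mpr hn) y).mpr hyC
    · rw [mem_sphere_zero_iff_norm, norm_smul, Real.norm_eq_abs, abs_of_pos (inv_pos.mpr hn),
        inv_mul_cancel₀ (ne_of_gt hn)]
    · exact smul_inv_smul₀ (ne_of_gt hn) y

/-- Goemans–Williamson hyperplane rounding: for nonzero vectors `{xᵛ} ⊂ ℝᴺ` and a uniformly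
random unit vector `z`, with `A = {v : ⟪xᵛ, z⟫ ≥ 0}`, the probability that an edge `uv`
crosses the cut `(A, Aᶜ)` equals `(1/π)·arccos(⟪xᵘ,xᵛ⟫/(‖xᵘ‖‖xᵛ‖))`. -/
theorem stmt_7 {V : Type*} (G : SimpleGraph V) (N : ℕ)
    (x : V → EuclideanSpace ℝ (Fin N)) (hx : ∀ v, x v ≠ 0)
    (u v : V) (huv : G.Adj u v) :
    ((((volume : Measure (EuclideanSpace ℝ (Fin N))).toSphere Set.univ)⁻¹ •
        (volume : Measure (EuclideanSpace ℝ (Fin N))).toSphere)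
      {z : Metric.sphere (0 : EuclideanSpace ℝ (Fin N)) 1 |
        ¬ ((0 ≤ (inner ℝ (x u) (z : EuclideanSpace ℝ (Fin N)) : ℝ)) ↔
            (0 ≤ (inner ℝ (x v) (z : EuclideanSpace ℝ (Fin N)) : ℝ)))})
      = ENNReal.ofReal
          (1 / Real.pi * Real.arccos ((inner ℝ (x u) (x v) : ℝ) / (‖x u‖ * ‖x v‖))) := by
  classical
  haveI : Nontrivial (EuclideanSpace ℝ (Fin N)) := nontrivial_of_ne (x u) 0 (hx u)
  have hNpos : 0 < N := by
    have h := Module.finrank_pos (R := ℝ) (M := EuclideanSpace ℝ (Fin N))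
    rwa [finrank_euclideanSpace_fin] at h
  have hu0 : (0:ℝ) < ‖x u‖ := norm_pos_iff.mpr (hx u)
  have hv0 : (0:ℝ) < ‖x v‖ := norm_pos_iff.mpr (hx v)
  set a : EuclideanSpace ℝ (Fin N) := ‖x u‖⁻¹ • x u with hadef
  set c : EuclideanSpace ℝ (Fin N) := ‖x v‖⁻¹ • x v with hcdef
  have hna : ‖a‖ = 1 := norm_smul_inv_norm (hx u)
  have hnc : ‖c‖ = 1 := norm_smul_inv_norm (hx v)
  have haa : (inner ℝ a a : ℝ) = 1 := by
    rw [real_inner_self_eq_norm_mul_norm, hna]; norm_num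
  have hcc : (inner ℝ c c : ℝ) = 1 := by
    rw [real_inner_self_eq_norm_mul_norm, hnc]; norm_num
  set ip : ℝ := (inner ℝ (x u) (x v) : ℝ) / (‖x u‖ * ‖x v‖) with hipdef
  have hipac : (inner ℝ a c : ℝ) = ip := by
    rw [hadef, hcdef, real_inner_smul_left, real_inner_smul_right, hipdef]
    field_simp
  have hsu : ∀ z : EuclideanSpace ℝ (Fin N),
      ((0:ℝ) ≤ inner ℝ (x u) z) ↔ ((0:ℝ) ≤ inner ℝ a z) := by
    intro z
    rw [hadef, real_inner_smul_left]
    exact (mul_nonneg_iff_of_pos_left (inv_pos.mpr hu0)).symm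
  have hsv : ∀ z : EuclideanSpace ℝ (Fin N),
      ((0:ℝ) ≤ inner ℝ (x v) z) ↔ ((0:ℝ) ≤ inner ℝ c z) := by
    intro z
    rw [hcdef, real_inner_smul_left]
    exact (mul_nonneg_iff_of_pos_left (inv_pos.mpr hv0)).symm
  set C : Set (EuclideanSpace ℝ (Fin N)) :=
    {y | ¬((0:ℝ) ≤ inner ℝ a y ↔ (0:ℝ) ≤ inner ℝ c y)} with hCdef
  have hSeq : {z : Metric.sphere (0 : EuclideanSpace ℝ (Fin N)) 1 |
      ¬ ((0 ≤ (inner ℝ (x u) (z : EuclideanSpace ℝ (Fin N)) : ℝ)) ↔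
          (0 ≤ (inner ℝ (x v) (z : EuclideanSpace ℝ (Fin N)) : ℝ)))} =
      (((↑) : sphere (0 : EuclideanSpace ℝ (Fin N)) 1 → EuclideanSpace ℝ (Fin N)) ⁻¹' C) := by
    ext z
    simp only [mem_setOf_eq, mem_preimage, hCdef]
    exact not_congr (iff_congr (hsu z) (hsv z))
  have hfa : Continuous fun y : EuclideanSpace ℝ (Fin N) => (inner ℝ a y : ℝ) :=
    continuous_const.inner continuous_id
  have hfc : Continuous fun y : EuclideanSpace ℝ (Fin N) => (inner ℝ c y : ℝ) :=
    continuous_const.inner continuous_id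
  have h1m : MeasurableSet {y : EuclideanSpace ℝ (Fin N) | (0:ℝ) ≤ inner ℝ a y} :=
    measurableSet_le measurable_const hfa.measurable
  have h2m : MeasurableSet {y : EuclideanSpace ℝ (Fin N) | (0:ℝ) ≤ inner ℝ c y} :=
    measurableSet_le measurable_const hfc.measurable
  have hCm : MeasurableSet C := by
    have he : C = ({y : EuclideanSpace ℝ (Fin N) | (0:ℝ) ≤ inner ℝ a y} ∩
        {y : EuclideanSpace ℝ (Fin N) | (0:ℝ) ≤ inner ℝ c y}ᶜ) ∪
        ({y : EuclideanSpace ℝ (Fin N) | (0:ℝ) ≤ inner ℝ a y}ᶜ ∩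
          {y : EuclideanSpace ℝ (Fin N) | (0:ℝ) ≤ inner ℝ c y}) := by
      ext y
      simp only [hCdef, mem_setOf_eq, mem_union, mem_inter_iff, mem_compl_iff, mem_setOf_eq]
      tauto
    rw [he]
    exact (h1m.inter h2m.compl).union (h1m.compl.inter h2m)
  have hCcone : ∀ r : ℝ, 0 < r → ∀ y, (r • y ∈ C ↔ y ∈ C) := by
    intro r hr y
    simp only [hCdef, mem_setOf_eq, real_inner_smul_right,
      mul_nonneg_iff_of_pos_left hr]
  set vb := volume (ball (0 : EuclideanSpace ℝ (Fin N)) 1) with hvb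
  have hvb0 : vb ≠ 0 := (measure_ball_pos _ _ one_pos).ne'
  have hvbt : vb ≠ ⊤ := measure_ball_lt_top.ne
  have htuniv : (volume : Measure (EuclideanSpace ℝ (Fin N))).toSphere Set.univ = N * vb := by
    rw [Measure.toSphere_apply_univ]
    rw [show (Module.finrank ℝ (EuclideanSpace ℝ (Fin N))) = N from finrank_euclideanSpace_fin]
  have hNvb0 : (N : ENNReal) * vb ≠ 0 :=
    mul_ne_zero (Nat.cast_ne_zero.mpr hNpos.ne') hvb0
  have hNvbt : (N : ENNReal) * vb ≠ ⊤ := ENNReal.mul_ne_top (ENNReal.natCast_ne_top N) hvbt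
  rw [Measure.smul_apply, smul_eq_mul, hSeq, htuniv]
  by_cases hdep : c - ip • a = 0
  · -- degenerate case
    have hc : c = ip • a := by rwa [sub_eq_zero] at hdep
    have hip1 : |ip| = 1 := by
      have := hnc
      rw [hc, norm_smul, hna, mul_one, Real.norm_eq_abs] at this
      exact this
    rcases abs_eq (by norm_num : (0:ℝ) ≤ 1) |>.mp hip1 with hip | hip
    · -- ip = 1 : set is empty
      have hCempty : C = ∅ := by
        ext y
        simp only [hCdef, mem_setOf_eq, mem_empty_iff_false, iff_false, not_not]
        rw [hc, hip, one_smul]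
      rw [hCempty]
      simp only [preimage_empty, measure_empty, mul_zero]
      rw [hip, Real.arccos_one, mul_zero, ENNReal.ofReal_zero]
    · -- ip = -1 : set is a.e. everything
      have hCc : Cᶜ = {y : EuclideanSpace ℝ (Fin N) | (inner ℝ a y : ℝ) = 0} := by
        ext y
        simp only [mem_compl_iff, hCdef, mem_setOf_eq, not_not]
        have hcy : (inner ℝ c y : ℝ) = -(inner ℝ a y : ℝ) := by
          rw [hc, hip, real_inner_smul_left]; ring
        rw [hcy]
        constructor
        · intro h
          by_contra hne
          rcases lt_or_gt_of_ne hne with hlt | hgt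
          · have := h.mpr (by linarith)
            linarith
          · have := h.mp (by linarith)
            linarith
        · intro h; rw [h]; norm_num
      have hker : volume Cᶜ = 0 := by
        rw [hCc]
        have : {y : EuclideanSpace ℝ (Fin N) | (inner ℝ a y : ℝ) = 0} =
            (LinearMap.ker (innerSL ℝ a).toLinearMap : Set (EuclideanSpace ℝ (Fin N))) := by
          ext y
          simp [LinearMap.mem_ker]
        rw [this]
        apply Measure.addHaar_submodule
        intro htop
        have : a ∈ LinearMap.ker (innerSL ℝ a).toLinearMap := by rw [htop]; trivial
        simp only [LinearMap.mem_ker, ContinuousLinearMap.coe_coe, innerSL_apply_apply] at this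
        rw [haa] at this
        norm_num at this
      have hCcm : MeasurableSet Cᶜ := hCm.compl
      have hCccone : ∀ r : ℝ, 0 < r → ∀ y, (r • y ∈ Cᶜ ↔ y ∈ Cᶜ) := by
        intro r hr y
        simp only [mem_compl_iff, not_iff_not]
        exact hCcone r hr y
      have hTc : (volume : Measure (EuclideanSpace ℝ (Fin N))).toSphere
          (((↑) : sphere (0 : EuclideanSpace ℝ (Fin N)) 1 → EuclideanSpace ℝ (Fin N)) ⁻¹' Cᶜ)
          = 0 := by
        rw [bridge Cᶜ hCcm hCccone]
        have hle : volume ((Cᶜ ∩ ball (0 : EuclideanSpace ℝ (Fin N)) 1) \ {0}) ≤ volume Cᶜ :=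
          measure_mono (fun y hy => hy.1.1)
        rw [hker] at hle
        simp [le_zero_iff.mp hle]
      have hfull : (volume : Measure (EuclideanSpace ℝ (Fin N))).toSphere
          (((↑) : sphere (0 : EuclideanSpace ℝ (Fin N)) 1 → EuclideanSpace ℝ (Fin N)) ⁻¹' C)
          = (N : ENNReal) * vb := by
        have hadd := measure_add_measure_compl
          (μ := (volume : Measure (EuclideanSpace ℝ (Fin N))).toSphere)
          (hCm.preimage measurable_subtype_coe)
        rw [← preimage_compl, hTc, add_zero] at hadd
        rw [hadd, htuniv]
      rw [hfull, ENNReal.inv_mul_cancel hNvb0 hNvbt, hip, Real.arccos_neg_one]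
      rw [one_div, inv_mul_cancel₀ pi_ne_zero, ENNReal.ofReal_one]
  · -- nondegenerate case
    set d := c - ip • a with hddef
    have hiple : |ip| ≤ 1 := by
      rw [hipdef]
      exact abs_real_inner_div_norm_mul_norm_le_one (x u) (x v)
    have hca : (inner ℝ c a : ℝ) = ip := by rw [real_inner_comm]; exact hipac
    have hdd : ‖d‖^2 = 1 - ip^2 := by
      rw [← real_inner_self_eq_norm_sq]
      simp only [hddef, inner_sub_left, inner_sub_right, real_inner_smul_left,
        real_inner_smul_right, haa, hcc, hipac, hca]
      ring
    have hd0 : 0 < ‖d‖ := norm_pos_iff.mpr hdep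
    have hip2 : ip^2 < 1 := by
      have hsq : 0 < ‖d‖^2 := pow_pos hd0 2
      linarith [hdd]
    have hipabs : |ip| < 1 := by
      rwa [sq_lt_one_iff_abs_lt_one] at hip2
    have hiplt : ip < 1 := (abs_lt.mp hipabs).2
    have hipgt : -1 < ip := (abs_lt.mp hipabs).1
    set θ := Real.arccos ip with hθdef
    have hθ0 : 0 < θ := Real.arccos_pos.mpr hiplt
    have hθπ : θ < π := lt_of_le_of_ne (Real.arccos_le_pi ip)
      (fun h => absurd (Real.arccos_eq_pi.mp h) (by linarith))
    set b := ‖d‖⁻¹ • d with hbdef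
    have hnb : ‖b‖ = 1 := norm_smul_inv_norm hdep
    have hcosθ : Real.cos θ = ip := Real.cos_arccos (by linarith) (by linarith)
    have hsinθ : Real.sin θ = ‖d‖ := by
      rw [hθdef, Real.sin_arccos, ← hdd, Real.sqrt_sq (norm_nonneg d)]
    have hiab : (inner ℝ a b : ℝ) = 0 := by
      rw [hbdef, real_inner_smul_right]
      have : (inner ℝ a d : ℝ) = 0 := by
        simp only [hddef, inner_sub_right, real_inner_smul_right, haa, hipac]
        ring
      rw [this, mul_zero]
    have hdecomp : ∀ y : EuclideanSpace ℝ (Fin N),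
        (inner ℝ c y : ℝ) = Real.cos θ * inner ℝ a y + Real.sin θ * inner ℝ b y := by
      intro y
      have hc' : c = ip • a + d := by rw [hddef]; abel
      have hdb : (inner ℝ d y : ℝ) = ‖d‖ * inner ℝ b y := by
        rw [hbdef, real_inner_smul_left, ← mul_assoc, mul_inv_cancel₀ hd0.ne', one_mul]
      rw [hc', inner_add_left, real_inner_smul_left, hdb, hcosθ, hsinθ]
    have hCeq : C = {y : EuclideanSpace ℝ (Fin N) |
        ¬(0 ≤ (inner ℝ a y : ℝ) ↔
          0 ≤ Real.cos θ * (inner ℝ a y : ℝ) + Real.sin θ * (inner ℝ b y : ℝ))} := by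
      ext y
      simp only [hCdef, mem_setOf_eq, hdecomp y]
    rw [bridge C hCm hCcone, measure_diff_null (measure_singleton 0), hCeq,
      K_E a b hna hnb hiab hθ0 hθπ]
    rw [mul_left_comm ((N : ENNReal)) (ENNReal.ofReal (θ/π)) vb]
    rw [← mul_assoc, mul_comm (((N : ENNReal) * vb)⁻¹) _, mul_assoc,
      ENNReal.inv_mul_cancel hNvb0 hNvbt, mul_one]
    congr 1
    ring
end

section
/- Let G be a graph with m edges on n vertices, and let c > 0 and 1 ≤ α ≤ 2 be constants such that every vertex subset S ⊆ V(G) spans at most c|S|^α edges. Then for each fixed τ ∈ (0,1), the sum Σ_{v ∈ V(G)} d(v)^τ is at least a positive constant (depending only on c, α, τ) times m^{τ + (1−τ)/α}. -/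
open Finset Real

lemma count_aux (n : ℕ) (G : SimpleGraph (Fin n)) [DecidableRel G.Adj] (S : Finset (Fin n)) :
    G.edgeFinset.card ≤ (G.induce (S : Set (Fin n))).edgeSet.ncard + ∑ v ∈ Sᶜ, G.degree v := by
  classical
  have hinj : Function.Injective (Sym2.map (Subtype.val : ↥(S : Set (Fin n)) → Fin n)) := by
    apply Sym2.map.injective
    exact Subtype.coe_injective
  have key : (G.induce (S : Set (Fin n))).edgeSet.ncard
      = (G.edgeFinset.filter (fun e => ∀ v ∈ e, v ∈ S)).card := by
    rw [← Set.ncard_coe_finset, ← Set.ncard_image_of_injective _ hinj]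
    congr 1
    ext e
    constructor
    · rintro ⟨e', he', rfl⟩
      revert he'
      refine Sym2.ind (fun u v he' => ?_) e'
      have hadj : G.Adj u.val v.val := he'
      simp only [Sym2.map_pair_eq, Finset.coe_filter, Set.mem_setOf_eq,
        SimpleGraph.mem_edgeFinset, SimpleGraph.mem_edgeSet]
      refine ⟨hadj, ?_⟩
      intro w hw
      rcases Sym2.mem_iff.1 hw with h | h
      · exact h ▸ u.property
      · exact h ▸ v.property
    · intro he
      simp only [Finset.coe_filter, Set.mem_setOf_eq, SimpleGraph.mem_edgeFinset] at he
      obtain ⟨he1, he2⟩ := he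
      revert he1 he2
      refine Sym2.ind (fun u v he1 he2 => ?_) e
      have hu : u ∈ S := he2 u (Sym2.mem_mk_left u v)
      have hv : v ∈ S := he2 v (Sym2.mem_mk_right u v)
      refine ⟨s(⟨u, hu⟩, ⟨v, hv⟩), ?_, by simp [Sym2.map_pair_eq]⟩
      exact (SimpleGraph.mem_edgeSet G).2 he1
  have split := Finset.card_filter_add_card_filter_not
    (s := G.edgeFinset) (p := fun e => ∀ v ∈ e, v ∈ S)
  have hsub : G.edgeFinset.filter (fun e => ¬ ∀ v ∈ e, v ∈ S)
      ⊆ Sᶜ.biUnion (fun v => G.incidenceFinset v) := by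
    intro e he
    rw [Finset.mem_filter] at he
    obtain ⟨he1, he2⟩ := he
    push_neg at he2
    obtain ⟨v, hv, hvS⟩ := he2
    exact Finset.mem_biUnion.2 ⟨v, Finset.mem_compl.2 hvS,
      (SimpleGraph.mem_incidenceFinset _ _ _).2 ⟨SimpleGraph.mem_edgeFinset.1 he1, hv⟩⟩
  have h2 : (G.edgeFinset.filter (fun e => ¬ ∀ v ∈ e, v ∈ S)).card ≤ ∑ v ∈ Sᶜ, G.degree v := by
    calc _ ≤ (Sᶜ.biUnion (fun v => G.incidenceFinset v)).card := Finset.card_le_card hsub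
      _ ≤ ∑ v ∈ Sᶜ, (G.incidenceFinset v).card := Finset.card_biUnion_le
      _ = ∑ v ∈ Sᶜ, G.degree v := by
          exact Finset.sum_congr rfl fun v _ => G.card_incidenceFinset_eq_degree v
  omega

/-- If every vertex subset `S` of a graph `G` spans at most `c·|S|^α` edges
(`c > 0`, `1 ≤ α ≤ 2`), then for fixed `τ ∈ (0,1)` we have
`Σ_v d(v)^τ ≥ C · m^{τ + (1−τ)/α}` for a constant `C > 0` depending only on `c, α, τ`. -/
theorem stmt_11 (c α τ : ℝ) (hc : 0 < c) (hα1 : 1 ≤ α) (hα2 : α ≤ 2)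
    (hτ1 : 0 < τ) (hτ2 : τ < 1) :
    ∃ C > 0, ∀ (n : ℕ) (G : SimpleGraph (Fin n)) [DecidableRel G.Adj],
      (∀ S : Finset (Fin n),
          ((G.induce (S : Set (Fin n))).edgeSet.ncard : ℝ) ≤ c * (S.card : ℝ) ^ α) →
      C * (G.edgeSet.ncard : ℝ) ^ (τ + (1 - τ) / α) ≤ ∑ v, (G.degree v : ℝ) ^ τ := by
  have hα0 : (0:ℝ) < α := lt_of_lt_of_le one_pos hα1
  set β : ℝ := τ + (1 - τ) / α with hβdef
  have hβ : 0 < β := by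
    have h1 : 0 < (1 - τ)/α := div_pos (by linarith) hα0
    rw [hβdef]; linarith
  refine ⟨min ((2*c) ^ (-(1/α))) (1/2),
    lt_min (Real.rpow_pos_of_pos (by linarith) _) one_half_pos, ?_⟩
  intro n G _ hSbound
  set C := min ((2*c) ^ (-(1/α))) (1/2) with hCdef
  set m : ℕ := G.edgeSet.ncard with hmdef
  have hsum_nonneg : ∀ T : Finset (Fin n), (0:ℝ) ≤ ∑ v ∈ T, (G.degree v : ℝ) ^ τ :=
    fun T => Finset.sum_nonneg fun v _ => Real.rpow_nonneg (Nat.cast_nonneg _) _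
  rcases Nat.eq_zero_or_pos m with hm0 | hm1
  · rw [hm0, Nat.cast_zero, Real.zero_rpow hβ.ne', mul_zero]
    exact hsum_nonneg univ
  set M : ℝ := (m : ℝ) with hMdef
  have hM1 : (1:ℝ) ≤ M := by rw [hMdef]; exact_mod_cast hm1
  have hM0 : (0:ℝ) < M := lt_of_lt_of_le one_pos hM1
  set x : ℝ := M ^ (1 - 1/α) with hxdef
  have hexp0 : (0:ℝ) ≤ 1 - 1/α := by
    have : 1/α ≤ 1 := by rw [div_le_one hα0]; exact hα1
    linarith
  have hx1 : (1:ℝ) ≤ x := by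
    calc (1:ℝ) = M ^ (0:ℝ) := (Real.rpow_zero M).symm
      _ ≤ M ^ (1 - 1/α) := Real.rpow_le_rpow_of_exponent_le hM1 hexp0
  have hx0 : (0:ℝ) < x := lt_of_lt_of_le one_pos hx1
  set S : Finset (Fin n) := univ.filter (fun v => x < (G.degree v : ℝ)) with hSdef
  set s : ℝ := (S.card : ℝ) with hsdef
  have hs0 : (0:ℝ) ≤ s := Nat.cast_nonneg _
  have hcount : M ≤ ((G.induce (S : Set (Fin n))).edgeSet.ncard : ℝ)
      + ∑ v ∈ Sᶜ, (G.degree v : ℝ) := by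
    have h := count_aux n G S
    have h' : (G.edgeFinset.card : ℝ) ≤ ((G.induce (S : Set (Fin n))).edgeSet.ncard : ℝ)
        + ((∑ v ∈ Sᶜ, G.degree v : ℕ) : ℝ) := by exact_mod_cast h
    rw [Nat.cast_sum] at h'
    have hmcard : M = (G.edgeFinset.card : ℝ) := by
      rw [hMdef, hmdef, ← SimpleGraph.coe_edgeFinset, Set.ncard_coe_finset]
    rw [hmcard]; exact h'
  have hcross : M - c * s ^ α ≤ ∑ v ∈ Sᶜ, (G.degree v : ℝ) := by
    have := hSbound S
    linarith
  have htot1 : ∑ v ∈ S, (G.degree v : ℝ) ^ τ ≤ ∑ v, (G.degree v : ℝ) ^ τ :=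
    Finset.sum_le_sum_of_subset_of_nonneg (subset_univ S)
      (fun v _ _ => Real.rpow_nonneg (Nat.cast_nonneg _) _)
  have htot2 : ∑ v ∈ Sᶜ, (G.degree v : ℝ) ^ τ ≤ ∑ v, (G.degree v : ℝ) ^ τ :=
    Finset.sum_le_sum_of_subset_of_nonneg (subset_univ Sᶜ)
      (fun v _ _ => Real.rpow_nonneg (Nat.cast_nonneg _) _)
  rcases le_or_gt (M/2) (c * s ^ α) with hcase | hcase
  · -- Case A : many high-degree vertices
    have hsa : M / (2*c) ≤ s ^ α := by
      rw [div_le_iff₀ (by linarith)]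
      calc M = (M/2) * 2 := by ring
        _ ≤ (c * s ^ α) * 2 := by linarith
        _ = s ^ α * (2 * c) := by ring
    have hs_ge : (M / (2*c)) ^ (1/α) ≤ s := by
      have h1 : (M / (2*c)) ^ (1/α) ≤ (s ^ α) ^ (1/α) :=
        Real.rpow_le_rpow (by positivity) hsa (by positivity)
      have h2 : (s ^ α) ^ (1/α) = s := by
        rw [← Real.rpow_mul hs0, mul_one_div, div_self hα0.ne', Real.rpow_one]
      rwa [h2] at h1
    have hxτ : (0:ℝ) ≤ x ^ τ := Real.rpow_nonneg hx0.le _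
    have hsum1 : s * x ^ τ ≤ ∑ v ∈ S, (G.degree v : ℝ) ^ τ := by
      have hterm : ∀ v ∈ S, x ^ τ ≤ (G.degree v : ℝ) ^ τ := by
        intro v hv
        rw [hSdef, mem_filter] at hv
        exact Real.rpow_le_rpow hx0.le hv.2.le hτ1.le
      calc s * x ^ τ = ∑ _v ∈ S, x ^ τ := by rw [Finset.sum_const, nsmul_eq_mul, hsdef]
        _ ≤ _ := Finset.sum_le_sum hterm
    have heq : (M / (2*c)) ^ (1/α) * x ^ τ = (2*c) ^ (-(1/α)) * M ^ β := by
      have e1 : (M / (2*c)) ^ (1/α) = M ^ (1/α) * (2*c) ^ (-(1/α)) := by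
        rw [Real.div_rpow hM0.le (by linarith : (0:ℝ) ≤ 2*c),
          Real.rpow_neg (by linarith : (0:ℝ) ≤ 2*c), div_eq_mul_inv]
      have e2 : x ^ τ = M ^ ((1 - 1/α) * τ) := by
        rw [hxdef, ← Real.rpow_mul hM0.le]
      have e3 : M ^ (1/α) * M ^ ((1 - 1/α) * τ) = M ^ β := by
        rw [← Real.rpow_add hM0]
        congr 1
        rw [hβdef]
        field_simp
        ring
      calc (M / (2*c)) ^ (1/α) * x ^ τ
          = (2*c) ^ (-(1/α)) * (M ^ (1/α) * M ^ ((1 - 1/α) * τ)) := by rw [e1, e2]; ring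
        _ = (2*c) ^ (-(1/α)) * M ^ β := by rw [e3]
    have h3 : (M / (2*c)) ^ (1/α) * x ^ τ ≤ s * x ^ τ :=
      mul_le_mul_of_nonneg_right hs_ge hxτ
    have hCle : C * M ^ β ≤ (2*c) ^ (-(1/α)) * M ^ β :=
      mul_le_mul_of_nonneg_right (min_le_left _ _) (Real.rpow_nonneg hM0.le _)
    calc C * M ^ β ≤ (2*c) ^ (-(1/α)) * M ^ β := hCle
      _ = (M / (2*c)) ^ (1/α) * x ^ τ := heq.symm
      _ ≤ s * x ^ τ := h3
      _ ≤ ∑ v ∈ S, (G.degree v : ℝ) ^ τ := hsum1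
      _ ≤ _ := htot1
  · -- Case B : few high-degree vertices
    have hterm : ∀ v ∈ Sᶜ, x ^ (τ-1) * (G.degree v : ℝ) ≤ (G.degree v : ℝ) ^ τ := by
      intro v hv
      rw [hSdef, mem_compl, mem_filter] at hv
      have hd : (G.degree v : ℝ) ≤ x := by
        by_contra h
        exact hv ⟨mem_univ v, by push_neg at h; exact h⟩
      rcases Nat.eq_zero_or_pos (G.degree v) with h0 | h0
      · rw [h0]; simp [Real.zero_rpow hτ1.ne']
      · have hd0 : (0:ℝ) < (G.degree v : ℝ) := by exact_mod_cast h0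
        have h1 : x ^ (τ-1) ≤ (G.degree v : ℝ) ^ (τ-1) :=
          Real.rpow_le_rpow_of_nonpos hd0 hd (by linarith)
        calc x ^ (τ-1) * (G.degree v : ℝ)
            ≤ (G.degree v : ℝ) ^ (τ-1) * (G.degree v : ℝ) :=
              mul_le_mul_of_nonneg_right h1 hd0.le
          _ = (G.degree v : ℝ) ^ (τ-1) * (G.degree v : ℝ) ^ (1:ℝ) := by
              rw [Real.rpow_one]
          _ = (G.degree v : ℝ) ^ (τ - 1 + 1) := (Real.rpow_add hd0 _ _).symm
          _ = (G.degree v : ℝ) ^ τ := by norm_num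
    have hxneg : (0:ℝ) ≤ x ^ (τ-1) := Real.rpow_nonneg hx0.le _
    have hlow : x ^ (τ-1) * (M/2) ≤ ∑ v ∈ Sᶜ, (G.degree v : ℝ) ^ τ := by
      calc x ^ (τ-1) * (M/2) ≤ x ^ (τ-1) * (M - c * s ^ α) :=
            mul_le_mul_of_nonneg_left (by linarith) hxneg
        _ ≤ x ^ (τ-1) * ∑ v ∈ Sᶜ, (G.degree v : ℝ) :=
            mul_le_mul_of_nonneg_left hcross hxneg
        _ = ∑ v ∈ Sᶜ, x ^ (τ-1) * (G.degree v : ℝ) := Finset.mul_sum _ _ _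
        _ ≤ _ := Finset.sum_le_sum hterm
    have heq : x ^ (τ-1) * (M/2) = (1/2) * M ^ β := by
      have e2 : x ^ (τ-1) = M ^ ((1 - 1/α) * (τ-1)) := by
        rw [hxdef, ← Real.rpow_mul hM0.le]
      have e3 : M ^ ((1 - 1/α) * (τ-1)) * M ^ (1:ℝ) = M ^ β := by
        rw [← Real.rpow_add hM0]
        congr 1
        rw [hβdef]
        field_simp
        ring
      calc x ^ (τ-1) * (M/2) = (1/2) * (M ^ ((1 - 1/α) * (τ-1)) * M ^ (1:ℝ)) := by
            rw [e2, Real.rpow_one]; ring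
        _ = (1/2) * M ^ β := by rw [e3]
    have hCle : C * M ^ β ≤ (1/2) * M ^ β :=
      mul_le_mul_of_nonneg_right (min_le_right _ _) (Real.rpow_nonneg hM0.le _)
    calc C * M ^ β ≤ (1/2) * M ^ β := hCle
      _ = x ^ (τ-1) * (M/2) := heq.symm
      _ ≤ ∑ v ∈ Sᶜ, (G.degree v : ℝ) ^ τ := hlow
      _ ≤ _ := htot2
end

section
/- Let G be a graph on vertex set [n], τ ∈ (0,1/2], ρ > 0, and define vectors x^i ∈ ℝⁿ as follows: x^i_i = 1 + ρdᵢ^τ/n, x^i_j = −ρdᵢ^{τ−1} for j ∈ N(i), and x^i_j = ρdᵢ^τ/n otherwise. Then for each edge ij ∈ E(G), writing d_{ij} = |N(i) ∩ N(j)|, we have ⟨x^i, x^j⟩ ≤ −ρ(dᵢ^{τ−1} + dⱼ^{τ−1}) − ρ²(dᵢdⱼ)^τ/n + 4ρ²(dᵢdⱼ)^{τ−1}·d_{ij}. -/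
open Finset

lemma aux_expand_15 {ι : Type*} (s : Finset ι) (u v p q : ι → ℝ) (a b c d : ℝ) :
    ∑ k ∈ s, (a + u k - c * p k) * (b + v k - d * q k)
    = a * b * s.card + a * (∑ k ∈ s, v k) - a * d * (∑ k ∈ s, q k)
      + b * (∑ k ∈ s, u k) + (∑ k ∈ s, u k * v k) - d * (∑ k ∈ s, u k * q k)
      - c * b * (∑ k ∈ s, p k) - c * (∑ k ∈ s, p k * v k)
      + c * d * (∑ k ∈ s, p k * q k) := by
  calc ∑ k ∈ s, (a + u k - c * p k) * (b + v k - d * q k)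
      = ∑ k ∈ s, (a * b + a * v k - a * d * q k + b * u k + u k * v k
          - d * (u k * q k) - c * b * p k - c * (p k * v k) + c * d * (p k * q k)) :=
        Finset.sum_congr rfl fun k _ => by ring
    _ = _ := by
        simp only [Finset.sum_add_distrib, Finset.sum_sub_distrib, ← Finset.mul_sum,
          Finset.sum_const, nsmul_eq_mul]
        ring

set_option maxHeartbeats 1600000 in
/-- Inner product bound for the Goemans–Williamson vectors: with `τ ∈ (0,1/2]`, `ρ > 0`,
vectors `xⁱ ∈ ℝⁿ` given by `xⁱᵢ = 1 + ρdᵢ^τ/n`, `xⁱⱼ = −ρdᵢ^{τ−1}` for `j ∈ N(i)` and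
`xⁱⱼ = ρdᵢ^τ/n` otherwise, every edge `ij` satisfies
`⟪xⁱ, xʲ⟫ ≤ −ρ(dᵢ^{τ−1} + dⱼ^{τ−1}) − ρ²(dᵢdⱼ)^τ/n + 4ρ²(dᵢdⱼ)^{τ−1}·d_{ij}`,
where `d_{ij} = |N(i) ∩ N(j)|`. -/
theorem stmt_15 (n : ℕ) (G : SimpleGraph (Fin n)) [DecidableRel G.Adj]
    (τ ρ : ℝ) (hτ1 : 0 < τ) (hτ2 : τ ≤ 1 / 2) (hρ : 0 < ρ)
    (x : Fin n → EuclideanSpace ℝ (Fin n))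
    (hx : ∀ v j, x v j =
      if j = v then 1 + ρ * (G.degree v : ℝ) ^ τ / n
      else if G.Adj v j then -(ρ * (G.degree v : ℝ) ^ (τ - 1))
      else ρ * (G.degree v : ℝ) ^ τ / n)
    (i j : Fin n) (hij : G.Adj i j) :
    (inner ℝ (x i) (x j) : ℝ) ≤
      -(ρ * ((G.degree i : ℝ) ^ (τ - 1) + (G.degree j : ℝ) ^ (τ - 1)))
        - ρ ^ 2 * ((G.degree i : ℝ) * (G.degree j : ℝ)) ^ τ / n
        + 4 * ρ ^ 2 * ((G.degree i : ℝ) * (G.degree j : ℝ)) ^ (τ - 1) *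
            ((G.neighborFinset i ∩ G.neighborFinset j).card : ℝ) := by
  classical
  have hne : i ≠ j := G.ne_of_adj hij
  have hnpos : 0 < n := i.pos
  have hN : (0:ℝ) < (n:ℝ) := by exact_mod_cast hnpos
  have hDpos : 0 < G.degree i := by
    rw [G.degree_pos_iff_exists_adj]; exact ⟨j, hij⟩
  have hEpos : 0 < G.degree j := by
    rw [G.degree_pos_iff_exists_adj]; exact ⟨i, hij.symm⟩
  set D : ℝ := (G.degree i : ℝ) with hDdef
  set E : ℝ := (G.degree j : ℝ) with hEdef
  have hD : (0:ℝ) < D := by rw [hDdef]; exact_mod_cast hDpos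
  have hE : (0:ℝ) < E := by rw [hEdef]; exact_mod_cast hEpos
  have hDn : D ≤ (n:ℝ) := by
    rw [hDdef]
    exact_mod_cast (by simpa using G.degree_lt_card_verts i : G.degree i < n).le
  have hEn : E ≤ (n:ℝ) := by
    rw [hEdef]
    exact_mod_cast (by simpa using G.degree_lt_card_verts j : G.degree j < n).le
  set m : ℝ := ((G.neighborFinset i ∩ G.neighborFinset j).card : ℝ) with hmdef
  have hm : 0 ≤ m := by rw [hmdef]; positivity
  -- inner product as a sum
  have hsum : (inner ℝ (x i) (x j) : ℝ) = ∑ k, x i k * x j k := by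
    simp [PiLp.inner_apply, RCLike.inner_apply, conj_trivial, mul_comm]
  -- pointwise decomposition
  have key : ∀ k, x i k * x j k =
      (ρ * D ^ τ / n + (if k = i then (1:ℝ) else 0)
        - (ρ * D ^ (τ - 1) + ρ * D ^ τ / n) * (if k ∈ G.neighborFinset i then (1:ℝ) else 0))
      * (ρ * E ^ τ / n + (if k = j then (1:ℝ) else 0)
        - (ρ * E ^ (τ - 1) + ρ * E ^ τ / n) * (if k ∈ G.neighborFinset j then (1:ℝ) else 0)) := by
    intro k
    rw [hx, hx]
    by_cases h1 : k = i <;> by_cases h2 : k = j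
    · exact absurd (h1 ▸ h2 ▸ rfl : i = j) hne
    · subst h1
      simp only [SimpleGraph.mem_neighborFinset, h2, hij.symm, G.irrefl, eq_self_iff_true,
        if_true, if_false, ite_true, ite_false]
      ring
    · subst h2
      simp only [SimpleGraph.mem_neighborFinset, h1, hij, G.irrefl, eq_self_iff_true,
        if_true, if_false, ite_true, ite_false]
      ring
    · by_cases h3 : G.Adj i k <;> by_cases h4 : G.Adj j k <;>
        simp only [SimpleGraph.mem_neighborFinset, h1, h2, h3, h4, if_true, if_false,
          ite_true, ite_false] <;> ring
  -- atomic sums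
  have s1 : ∑ k, (if k = i then (1:ℝ) else 0) = 1 := by
    rw [Finset.sum_ite_eq' Finset.univ i (fun _ => (1:ℝ))]; simp
  have s2 : ∑ k, (if k = j then (1:ℝ) else 0) = 1 := by
    rw [Finset.sum_ite_eq' Finset.univ j (fun _ => (1:ℝ))]; simp
  have s3 : ∑ k, (if k ∈ G.neighborFinset i then (1:ℝ) else 0) = D := by
    rw [Finset.sum_ite_mem, Finset.univ_inter, Finset.sum_const, nsmul_eq_mul, mul_one,
      G.card_neighborFinset_eq_degree, hDdef]
  have s4 : ∑ k, (if k ∈ G.neighborFinset j then (1:ℝ) else 0) = E := by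
    rw [Finset.sum_ite_mem, Finset.univ_inter, Finset.sum_const, nsmul_eq_mul, mul_one,
      G.card_neighborFinset_eq_degree, hEdef]
  have s5 : ∑ k, (if k = i then (1:ℝ) else 0) * (if k = j then (1:ℝ) else 0) = 0 := by
    have h : ∀ k : Fin n, (if k = i then (1:ℝ) else 0) * (if k = j then (1:ℝ) else 0)
        = if k = i then (if k = j then (1:ℝ) else 0) else 0 := fun k => by split <;> simp
    rw [Finset.sum_congr rfl fun k _ => h k, Finset.sum_ite_eq' Finset.univ i]
    simp [hne]
  have s6 : ∑ k, (if k = i then (1:ℝ) else 0)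
      * (if k ∈ G.neighborFinset j then (1:ℝ) else 0) = 1 := by
    have hmem : i ∈ G.neighborFinset j := by
      rw [SimpleGraph.mem_neighborFinset]; exact hij.symm
    have h : ∀ k : Fin n, (if k = i then (1:ℝ) else 0)
        * (if k ∈ G.neighborFinset j then (1:ℝ) else 0)
        = if k = i then (if k ∈ G.neighborFinset j then (1:ℝ) else 0) else 0 :=
      fun k => by split <;> simp
    rw [Finset.sum_congr rfl fun k _ => h k, Finset.sum_ite_eq' Finset.univ i]
    simp [hmem]
  have s7 : ∑ k, (if k ∈ G.neighborFinset i then (1:ℝ) else 0)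
      * (if k = j then (1:ℝ) else 0) = 1 := by
    have hmem : j ∈ G.neighborFinset i := by
      rw [SimpleGraph.mem_neighborFinset]; exact hij
    have h : ∀ k : Fin n, (if k ∈ G.neighborFinset i then (1:ℝ) else 0)
        * (if k = j then (1:ℝ) else 0)
        = if k = j then (if k ∈ G.neighborFinset i then (1:ℝ) else 0) else 0 :=
      fun k => by by_cases hk : k = j <;> simp [hk]
    rw [Finset.sum_congr rfl fun k _ => h k, Finset.sum_ite_eq' Finset.univ j]
    simp [hmem]
  have s8 : ∑ k, (if k ∈ G.neighborFinset i then (1:ℝ) else 0)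
      * (if k ∈ G.neighborFinset j then (1:ℝ) else 0) = m := by
    have h : ∀ k : Fin n, (if k ∈ G.neighborFinset i then (1:ℝ) else 0)
        * (if k ∈ G.neighborFinset j then (1:ℝ) else 0)
        = if k ∈ G.neighborFinset i ∩ G.neighborFinset j then (1:ℝ) else 0 := by
      intro k
      by_cases ha : k ∈ G.neighborFinset i <;> by_cases hb : k ∈ G.neighborFinset j <;>
        simp [ha, hb]
    rw [Finset.sum_congr rfl fun k _ => h k, Finset.sum_ite_mem, Finset.univ_inter,
      Finset.sum_const, nsmul_eq_mul, mul_one, hmdef]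
  have hcard : ((Finset.univ : Finset (Fin n)).card : ℝ) = (n : ℝ) := by simp
  have hval : (inner ℝ (x i) (x j) : ℝ) =
      (ρ * D ^ τ / n) * (ρ * E ^ τ / n) * n
      + (ρ * D ^ τ / n)
      - (ρ * D ^ τ / n) * (ρ * E ^ (τ - 1) + ρ * E ^ τ / n) * E
      + (ρ * E ^ τ / n)
      - (ρ * E ^ (τ - 1) + ρ * E ^ τ / n)
      - (ρ * D ^ (τ - 1) + ρ * D ^ τ / n) * (ρ * E ^ τ / n) * D
      - (ρ * D ^ (τ - 1) + ρ * D ^ τ / n)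
      + (ρ * D ^ (τ - 1) + ρ * D ^ τ / n) * (ρ * E ^ (τ - 1) + ρ * E ^ τ / n) * m := by
    rw [hsum, Finset.sum_congr rfl fun k _ => key k, aux_expand_15]
    rw [s1, s2, s3, s4, s5, s6, s7, s8, hcard]
    ring
  rw [hval]
  -- rpow identities
  have hDt : D ^ (τ - 1) = D ^ τ / D := by
    rw [Real.rpow_sub hD, Real.rpow_one]
  have hEt : E ^ (τ - 1) = E ^ τ / E := by
    rw [Real.rpow_sub hE, Real.rpow_one]
  have hDE : (D * E) ^ τ = D ^ τ * E ^ τ := Real.mul_rpow hD.le hE.le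
  have hDE' : (D * E) ^ (τ - 1) = (D ^ τ / D) * (E ^ τ / E) := by
    rw [Real.mul_rpow hD.le hE.le, hDt, hEt]
  rw [hDt, hEt, hDE, hDE']
  set P : ℝ := D ^ τ with hPdef
  set Q : ℝ := E ^ τ with hQdef
  have hP : 0 < P := by rw [hPdef]; exact Real.rpow_pos_of_pos hD τ
  have hQ : 0 < Q := by rw [hQdef]; exact Real.rpow_pos_of_pos hE τ
  -- key estimates
  have h1 : ρ * P / n ≤ ρ * P / D := by
    apply div_le_div_of_nonneg_left (by positivity) hD hDn
  have h2 : ρ * Q / n ≤ ρ * Q / E := by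
    apply div_le_div_of_nonneg_left (by positivity) hE hEn
  have e1 : (ρ * P / n) * (ρ * Q / n) * n
      - (ρ * P / n) * (ρ * (Q / E) + ρ * Q / n) * E
      - (ρ * (P / D) + ρ * P / n) * (ρ * Q / n) * D
      = -(ρ ^ 2 * (P * Q) / n) - ρ ^ 2 * P * Q * (D + E) / n ^ 2 := by
    field_simp
    ring
  have e2 : (ρ * (P / D) + ρ * P / n) * (ρ * (Q / E) + ρ * Q / n) * m
      ≤ 4 * ρ ^ 2 * (P / D * (Q / E)) * m := by
    apply mul_le_mul_of_nonneg_right _ hm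
    have hA : ρ * (P / D) + ρ * P / n ≤ 2 * (ρ * (P / D)) := by
      have hh : ρ * P / D = ρ * (P / D) := by ring
      rw [← hh]; linarith [h1]
    have hB : ρ * (Q / E) + ρ * Q / n ≤ 2 * (ρ * (Q / E)) := by
      have hh : ρ * Q / E = ρ * (Q / E) := by ring
      rw [← hh]; linarith [h2]
    calc (ρ * (P / D) + ρ * P / n) * (ρ * (Q / E) + ρ * Q / n)
        ≤ (2 * (ρ * (P / D))) * (2 * (ρ * (Q / E))) := by
          apply mul_le_mul hA hB (by positivity) (by positivity)
      _ = 4 * ρ ^ 2 * (P / D * (Q / E)) := by ring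
  have e3 : 0 ≤ ρ ^ 2 * P * Q * (D + E) / n ^ 2 := by positivity
  nlinarith [e1, e2, e3]
end

section
/- Let G be a graph such that for every vertex v, the subgraph induced on N(v) contains at most c·d(v)^{2−ε} edges, where c > 0 and ε ∈ [0,1]. Let τ = min{ε, 1/2}, and for each edge ij let d_{ij} = |N(i) ∩ N(j)|. Then Σ_{ij ∈ E(G)} (dᵢdⱼ)^{τ−1}·d_{ij} ≤ c · Σ_{v ∈ V(G)} d(v)^τ. -/
open Finset SimpleGraph

theorem count_aux_s16 {V : Type*} [Fintype V] [DecidableEq V] (G : SimpleGraph V)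
    [DecidableRel G.Adj] (v : V) :
    ∑ j ∈ G.neighborFinset v, ((G.neighborFinset v ∩ G.neighborFinset j).card) =
      2 * ((G.induce (G.neighborSet v)).edgeSet.ncard) := by
  classical
  set H := G.induce (G.neighborSet v) with hH
  haveI hdec : DecidableRel H.Adj := fun a b => by
    change Decidable (G.Adj a b); infer_instance
  have hdeg : ∀ a : ↥(G.neighborSet v),
      H.degree a = (G.neighborFinset v ∩ G.neighborFinset (a : V)).card := by
    intro a
    rw [← card_neighborFinset_eq_degree]
    refine Finset.card_bij (fun b _ => (b : V)) ?_ ?_ ?_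
    · intro b hb
      rw [mem_neighborFinset] at hb
      rw [Finset.mem_inter, mem_neighborFinset, mem_neighborFinset]
      exact ⟨b.2, hb⟩
    · intro b1 _ b2 _ h; exact Subtype.ext h
    · intro b hb
      rw [Finset.mem_inter, mem_neighborFinset, mem_neighborFinset] at hb
      exact ⟨⟨b, hb.1⟩, by rw [mem_neighborFinset]; exact hb.2, rfl⟩
  calc ∑ j ∈ G.neighborFinset v, (G.neighborFinset v ∩ G.neighborFinset j).card
      = ∑ a : ↥(G.neighborSet v), (G.neighborFinset v ∩ G.neighborFinset (a : V)).card := by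
        rw [neighborFinset_def, ← Finset.sum_set_coe]
    _ = ∑ a : ↥(G.neighborSet v), H.degree a := by simp [hdeg]
    _ = 2 * #H.edgeFinset := H.sum_degrees_eq_twice_card_edges
    _ = 2 * H.edgeSet.ncard := by rw [← Set.ncard_coe_finset, SimpleGraph.coe_edgeFinset]

/-- If every neighbourhood `N(v)` of `G` spans at most `c·d(v)^{2−ε}` edges and
`τ = min{ε, 1/2}`, then `Σ_{ij ∈ E(G)} (dᵢdⱼ)^{τ−1}·d_{ij} ≤ c·Σ_v d(v)^τ`,
where `d_{ij} = |N(i) ∩ N(j)|`. (The sum over edges is written as half the sum over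
ordered adjacent pairs.) -/
theorem stmt_16 {V : Type*} [Fintype V] [DecidableEq V] (G : SimpleGraph V)
    [DecidableRel G.Adj] (c ε : ℝ) (hc : 0 < c) (hε1 : 0 ≤ ε) (hε2 : ε ≤ 1)
    (hsparse : ∀ v : V, ((G.induce (G.neighborSet v)).edgeSet.ncard : ℝ)
        ≤ c * (G.degree v : ℝ) ^ (2 - ε)) :
    (1 / 2) * ∑ p ∈ Finset.univ.filter (fun p : V × V => G.Adj p.1 p.2),
        ((G.degree p.1 : ℝ) * (G.degree p.2 : ℝ)) ^ (min ε (1 / 2) - 1) *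
          ((G.neighborFinset p.1 ∩ G.neighborFinset p.2).card : ℝ)
      ≤ c * ∑ v, (G.degree v : ℝ) ^ (min ε (1 / 2)) := by
  classical
  set τ := min ε (1/2) with hτdef
  have hτ0 : 0 ≤ τ := le_min hε1 (by norm_num)
  have hτε : τ ≤ ε := min_le_left _ _
  set S := Finset.univ.filter (fun p : V × V => G.Adj p.1 p.2) with hS
  set d : V → ℝ := fun v => (G.degree v : ℝ) with hd
  set w : V → V → ℝ := fun i j => ((G.neighborFinset i ∩ G.neighborFinset j).card : ℝ) with hw
  have hd0 : ∀ v, 0 ≤ d v := fun v => Nat.cast_nonneg _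
  have hw0 : ∀ i j, 0 ≤ w i j := fun i j => Nat.cast_nonneg _
  have hwsymm : ∀ i j, w i j = w j i := by
    intro i j; simp only [hw, Finset.inter_comm]
  have hdpos : ∀ {i j : V}, G.Adj i j → 1 ≤ d i := by
    intro i j h
    have : 0 < G.degree i := by
      rw [G.degree_pos_iff_exists_adj]; exact ⟨j, h⟩
    simp only [hd]; exact_mod_cast this
  have pairsum : ∀ (g : V → V → ℝ),
      ∑ p ∈ S, g p.1 p.2 = ∑ i, ∑ j ∈ G.neighborFinset i, g i j := by
    intro g
    rw [hS, ← Finset.univ_product_univ, Finset.sum_filter, Finset.sum_product]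
    simp [neighborFinset_eq_filter, Finset.sum_filter]
  -- per-vertex bound
  have key : ∀ i : V, d i ^ (2*τ-2) * ∑ j ∈ G.neighborFinset i, w i j
      ≤ 2 * c * d i ^ τ := by
    intro i
    rcases eq_or_lt_of_le (hd0 i) with h0 | h0
    · have hdeg0 : G.degree i = 0 := by
        have := h0.symm; simp only [hd] at this; exact_mod_cast this
      have hne : G.neighborFinset i = ∅ := by
        rw [← Finset.card_eq_zero, card_neighborFinset_eq_degree, hdeg0]
      rw [hne, Finset.sum_empty, mul_zero]
      have : (0:ℝ) ≤ d i ^ τ := Real.rpow_nonneg (hd0 i) _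
      positivity
    · have hd1 : 1 ≤ d i := by
        have : 0 < G.degree i := by
          simp only [hd] at h0; exact_mod_cast h0
        simp only [hd]; exact_mod_cast this
      have hsum : ∑ j ∈ G.neighborFinset i, w i j ≤ 2 * (c * d i ^ (2-ε)) := by
        have hcount := count_aux_s16 G i
        have heq : (∑ j ∈ G.neighborFinset i, w i j)
            = 2 * ((G.induce (G.neighborSet i)).edgeSet.ncard : ℝ) := by
          simp only [hw]; exact_mod_cast hcount
        rw [heq]
        have := hsparse i
        simp only [hd]; linarith
      have hexp : d i ^ (2-ε) ≤ d i ^ (2-τ) :=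
        Real.rpow_le_rpow_of_exponent_le hd1 (by linarith)
      have hp : (0:ℝ) ≤ d i ^ (2*τ-2) := Real.rpow_nonneg (hd0 i) _
      calc d i ^ (2*τ-2) * ∑ j ∈ G.neighborFinset i, w i j
          ≤ d i ^ (2*τ-2) * (2 * (c * d i ^ (2-τ))) := by
            apply mul_le_mul_of_nonneg_left _ hp
            calc ∑ j ∈ G.neighborFinset i, w i j ≤ 2*(c * d i ^ (2-ε)) := hsum
              _ ≤ 2*(c * d i ^ (2-τ)) := by
                  have := mul_le_mul_of_nonneg_left hexp hc.le; linarith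
        _ = 2 * c * d i ^ τ := by
            have hmul : d i ^ (2*τ-2) * d i ^ (2-τ) = d i ^ τ := by
              rw [← Real.rpow_add h0]; ring_nf
            rw [show d i ^ (2*τ-2) * (2*(c * d i ^ (2-τ)))
                = 2*c*(d i ^ (2*τ-2) * d i ^ (2-τ)) from by ring, hmul]
  -- AM-GM
  have amgm : ∀ i j, G.Adj i j →
      (d i * d j) ^ (τ-1) ≤ (1/2) * (d i ^ (2*τ-2) + d j ^ (2*τ-2)) := by
    intro i j h
    have hi : (0:ℝ) < d i := lt_of_lt_of_le one_pos (hdpos h)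
    have hj : (0:ℝ) < d j := lt_of_lt_of_le one_pos (hdpos h.symm)
    have hsq : ∀ x:ℝ, 0 < x → (x^(τ-1))^2 = x^(2*τ-2) := by
      intro x hx
      rw [← Real.rpow_natCast (x^(τ-1)) 2, ← Real.rpow_mul hx.le]
      norm_num; ring_nf
    have h2 := two_mul_le_add_sq (d i ^ (τ-1)) (d j ^ (τ-1))
    rw [Real.mul_rpow hi.le hj.le]
    rw [hsq _ hi, hsq _ hj] at h2
    nlinarith [h2]
  -- symmetry of the pair sum
  have hsymmsum : ∑ p ∈ S, d p.2 ^ (2*τ-2) * w p.1 p.2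
      = ∑ p ∈ S, d p.1 ^ (2*τ-2) * w p.1 p.2 := by
    apply Finset.sum_nbij' (fun p => Prod.swap p) (fun p => Prod.swap p)
    · intro p hp; simp only [hS, Finset.mem_filter] at hp ⊢
      exact ⟨Finset.mem_univ _, hp.2.symm⟩
    · intro p hp; simp only [hS, Finset.mem_filter] at hp ⊢
      exact ⟨Finset.mem_univ _, hp.2.symm⟩
    · intro p _; simp
    · intro p _; simp
    · intro p _; simp [hwsymm p.1 p.2]
  calc (1/2) * ∑ p ∈ S, (d p.1 * d p.2) ^ (τ-1) * w p.1 p.2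
      ≤ (1/2) * ∑ p ∈ S, (1/2) * (d p.1 ^ (2*τ-2) + d p.2 ^ (2*τ-2)) * w p.1 p.2 := by
        apply mul_le_mul_of_nonneg_left _ (by norm_num)
        apply Finset.sum_le_sum
        intro p hp
        simp only [hS, Finset.mem_filter] at hp
        exact mul_le_mul_of_nonneg_right (amgm p.1 p.2 hp.2) (hw0 p.1 p.2)
    _ = (1/2) * ∑ p ∈ S, d p.1 ^ (2*τ-2) * w p.1 p.2 := by
        rw [show ∀ s : ℝ, (1/2) * s = (1/2) * s from fun s => rfl]
        congr 1
        have expand : ∑ p ∈ S, (1/2) * (d p.1 ^ (2*τ-2) + d p.2 ^ (2*τ-2)) * w p.1 p.2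
            = (1/2) * (∑ p ∈ S, d p.1 ^ (2*τ-2) * w p.1 p.2
                + ∑ p ∈ S, d p.2 ^ (2*τ-2) * w p.1 p.2) := by
          rw [← Finset.sum_add_distrib, Finset.mul_sum]
          apply Finset.sum_congr rfl
          intro p _; ring
        rw [expand, hsymmsum]; ring
    _ = (1/2) * ∑ i, d i ^ (2*τ-2) * ∑ j ∈ G.neighborFinset i, w i j := by
        rw [pairsum (fun i j => d i ^ (2*τ-2) * w i j)]
        congr 1
        apply Finset.sum_congr rfl
        intro i _
        rw [Finset.mul_sum]
    _ ≤ (1/2) * ∑ i, 2 * c * d i ^ τ := by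
        apply mul_le_mul_of_nonneg_left _ (by norm_num)
        exact Finset.sum_le_sum (fun i _ => key i)
    _ = c * ∑ v, d v ^ τ := by
        rw [← Finset.mul_sum, ← mul_assoc]; ring_nf
end
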